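/- arXiv:2405.03294 — 9 statements merged into one kernel-verified Lean document; each statement's English description precedes it below -/
import Mathlib

section
/- For real z > 0 and real s with s > z, the generalized Dirichlet beta function β(z,s) = (1/Γ(s)) ∫₀^∞ x^{s-1}/cosh^z(x) dx admits the series expansion β(z,s) = 2^z Σ_{n=0}^∞ (-1)^n (z)_n / (n! (2n+z)^s), where (z)_n is the Pochhammer symbol. -/
open Real Set MeasureTheory Filter Topology

namespace GenBeta

noncomputable def P (z : ℝ) (n : ℕ) : ℝ := Real.Gamma (z + n) / (Real.Gamma z * n.factorial)

lemma P_pos {z : ℝ} (hz : 0 < z) (n : ℕ) : 0 < P z n := by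
  have h1 : 0 < Real.Gamma (z + n) := Real.Gamma_pos_of_pos (by positivity)
  have h2 : 0 < Real.Gamma z := Real.Gamma_pos_of_pos hz
  have h3 : (0:ℝ) < n.factorial := by positivity
  exact div_pos h1 (by positivity)

lemma P_zero {z : ℝ} (hz : 0 < z) : P z 0 = 1 := by
  have h2 : Real.Gamma z ≠ 0 := (Real.Gamma_pos_of_pos hz).ne'
  simp [P, div_self h2]

lemma P_succ {z : ℝ} (hz : 0 < z) (n : ℕ) :
    P z (n + 1) = P z n * ((z + n) / (n + 1)) := by
  have hzn : z + (n:ℝ) ≠ 0 := by positivity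
  have h1 : Real.Gamma (z + (n + 1 : ℕ)) = (z + n) * Real.Gamma (z + n) := by
    have hc : z + ((n + 1 : ℕ) : ℝ) = (z + n) + 1 := by push_cast; ring
    rw [hc, Real.Gamma_add_one hzn]
  have h2 : ((n+1 : ℕ).factorial : ℝ) = (n + 1) * (n.factorial : ℝ) := by
    push_cast [Nat.factorial_succ]; ring
  have hg : Real.Gamma z ≠ 0 := (Real.Gamma_pos_of_pos hz).ne'
  have hf : (n.factorial : ℝ) ≠ 0 := by positivity
  rw [P, P, h1, h2]
  field_simp


lemma tendsto_ratio {z r : ℝ} :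
    Tendsto (fun n : ℕ => ((n:ℝ) + 2) / ((n:ℝ) + 1) * ((z + n) / ((n:ℝ) + 1)) * r)
      atTop (𝓝 r) := by
  have h0 : Tendsto (fun n : ℕ => 1 / ((n:ℝ) + 1)) atTop (𝓝 0) :=
    tendsto_one_div_add_atTop_nhds_zero_nat
  have h1 : Tendsto (fun n : ℕ => ((n:ℝ) + 2) / ((n:ℝ) + 1)) atTop (𝓝 1) := by
    have := (tendsto_const_nhds (x := (1:ℝ)) (f := atTop (α := ℕ))).add h0
    rw [add_zero] at this
    refine this.congr fun n => ?_
    have : ((n:ℝ) + 1) ≠ 0 := by positivity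
    field_simp
    ring
  have h2 : Tendsto (fun n : ℕ => (z + (n:ℝ)) / ((n:ℝ) + 1)) atTop (𝓝 1) := by
    have := (tendsto_const_nhds (x := (1:ℝ)) (f := atTop (α := ℕ))).add (h0.const_mul (z - 1))
    rw [mul_zero, add_zero] at this
    refine this.congr fun n => ?_
    have : ((n:ℝ) + 1) ≠ 0 := by positivity
    field_simp
    ring
  have := (h1.mul h2).mul_const r
  simpa using this

lemma summable_aux {z : ℝ} (hz : 0 < z) {r : ℝ} (hr0 : 0 < r) (hr1 : r < 1) :
    Summable (fun n : ℕ => ((n:ℝ) + 1) * P z n * r ^ n) := by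
  set a : ℕ → ℝ := fun n => ((n:ℝ) + 1) * P z n * r ^ n with ha
  have hapos : ∀ n, 0 < a n := fun n => by
    have := P_pos hz n
    positivity
  refine summable_of_ratio_norm_eventually_le (r := (1 + r) / 2) (by linarith) ?_
  have hev : ∀ᶠ n : ℕ in atTop,
      ((n:ℝ) + 2) / ((n:ℝ) + 1) * ((z + n) / ((n:ℝ) + 1)) * r ≤ (1 + r) / 2 :=
    tendsto_ratio.eventually_le_const (by linarith)
  filter_upwards [hev] with n hn
  have key : a (n + 1) = a n * (((n:ℝ) + 2) / ((n:ℝ) + 1) * ((z + n) / ((n:ℝ) + 1)) * r) := by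
    have h1 : ((n:ℝ) + 1) ≠ 0 := by positivity
    simp only [ha, P_succ hz n]
    push_cast
    field_simp
    ring
  rw [Real.norm_eq_abs, Real.norm_eq_abs, abs_of_pos (hapos _), abs_of_pos (hapos _), key,
    mul_comm ((1 + r) / 2)]
  have hfac : 0 ≤ ((n:ℝ) + 2) / ((n:ℝ) + 1) * ((z + n) / ((n:ℝ) + 1)) * r := by
    have hzn : (0:ℝ) ≤ z + n := by positivity
    positivity
  exact mul_le_mul_of_nonneg_left hn (hapos n).le


lemma hasSum_binomial {z : ℝ} (hz : 0 < z) {t : ℝ} (ht0 : 0 < t) (ht1 : t < 1) :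
    HasSum (fun n : ℕ => (-1) ^ n * P z n * t ^ n) ((1 + t) ^ (-z)) := by
  set r : ℝ := (1 + t) / 2 with hr
  have hr0 : 0 < r := by positivity
  have hr1 : r < 1 := by rw [hr]; linarith
  have htr : t < r := by rw [hr]; linarith
  set g : ℕ → ℝ → ℝ := fun n y => (-1) ^ n * P z n * y ^ n with hg
  set g' : ℕ → ℝ → ℝ := fun n y => (-1) ^ n * P z n * ((n:ℝ) * y ^ (n - 1)) with hg'
  set u : ℕ → ℝ := fun n => ((n:ℝ) + 1) * P z n * r ^ n * r⁻¹ with hu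
  have hu_sum : Summable u := (summable_aux hz hr0 hr1).mul_right r⁻¹
  have hopen : IsOpen (Ioo (-r) r) := isOpen_Ioo
  have hconn : IsPreconnected (Ioo (-r) r) := (convex_Ioo _ _).isPreconnected
  have h0mem : (0:ℝ) ∈ Ioo (-r) r := ⟨by linarith, hr0⟩
  have hderiv : ∀ (n : ℕ) (y : ℝ), y ∈ Ioo (-r) r → HasDerivAt (g n) (g' n y) y :=
    fun n y _ => (hasDerivAt_pow n y).const_mul _
  have habs : ∀ (n : ℕ) (y : ℝ), y ∈ Ioo (-r) r → ‖g' n y‖ ≤ u n := by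
    intro n y hy
    have hyr : |y| ≤ r := le_of_lt (abs_lt.mpr ⟨hy.1, hy.2⟩)
    rcases n with _ | m
    · have hP := P_pos hz 0
      simp only [hg', hu, Nat.cast_zero, zero_mul, mul_zero, norm_zero]
      positivity
    · have hP := P_pos hz (m + 1)
      have h1 : ‖g' (m + 1) y‖ = P z (m + 1) * (((m:ℝ) + 1) * |y| ^ m) := by
        simp only [hg', Real.norm_eq_abs, abs_mul, abs_pow, abs_neg, abs_one, one_pow, one_mul,
          abs_of_pos hP, Nat.add_sub_cancel]
        rw [Nat.abs_cast]
        push_cast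
        ring
      rw [h1, hu]
      have h2 : |y| ^ m ≤ r ^ m := pow_le_pow_left₀ (abs_nonneg y) hyr m
      have h3 : ((m:ℝ) + 1 + 1) * P z (m + 1) * r ^ (m + 1) * r⁻¹
          = P z (m + 1) * (((m:ℝ) + 1 + 1) * r ^ m) := by
        rw [pow_succ]
        field_simp
      push_cast
      rw [h3]
      have hm0 : (0:ℝ) ≤ (m:ℝ) + 1 := by positivity
      have h4 : ((m:ℝ) + 1) * |y| ^ m ≤ ((m:ℝ) + 1 + 1) * r ^ m := by
        have := mul_le_mul_of_nonneg_left h2 hm0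
        have h5 : ((m:ℝ) + 1) * r ^ m ≤ ((m:ℝ) + 1 + 1) * r ^ m := by
          have : (0:ℝ) ≤ r ^ m := by positivity
          nlinarith
        linarith
      exact mul_le_mul_of_nonneg_left h4 hP.le
  have hg0 : Summable (fun n => g n 0) := by
    apply summable_of_ne_finset_zero (s := {0})
    intro n hn
    simp only [Finset.mem_singleton] at hn
    simp [hg, zero_pow hn]
  have hf : ∀ y ∈ Ioo (-r) r, HasDerivAt (fun w => ∑' n, g n w) (∑' n, g' n y) y :=
    fun y hy => hasDerivAt_tsum_of_isPreconnected hu_sum hopen hconn hderiv habs h0mem hg0 hy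
  have hSg : ∀ y ∈ Ioo (-r) r, Summable (fun n => g n y) := fun y hy =>
    summable_of_summable_hasDerivAt_of_isPreconnected hu_sum hopen hconn hderiv habs h0mem hg0 hy
  have hSg' : ∀ y ∈ Ioo (-r) r, Summable (fun n => g' n y) := fun y hy =>
    hu_sum.of_norm_bounded (fun n => habs n y hy)
  have hODE : ∀ y ∈ Ioo (-r) r, (1 + y) * (∑' n, g' n y) = -z * ∑' n, g n y := by
    intro y hy
    have hS2 := hSg' y hy
    have hS1 := hSg y hy
    have hA : ∑' n, g' n y = ∑' n, g' (n + 1) y := by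
      rw [Summable.tsum_eq_zero_add hS2]
      simp [hg']
    have hterm : ∀ n : ℕ, g' (n + 1) y = -z * g n y - (n:ℝ) * g n y := by
      intro n
      have h1 : ((n:ℝ) + 1) ≠ 0 := by positivity
      simp only [hg', hg, P_succ hz n, Nat.add_sub_cancel, pow_succ]
      push_cast
      field_simp
      ring
    have hyg : ∀ n : ℕ, y * g' n y = (n:ℝ) * g n y := by
      intro n
      rcases n with _ | m
      · simp [hg, hg']
      · simp only [hg, hg', Nat.add_sub_cancel]
        push_cast
        ring
    have hn_sum : Summable (fun n : ℕ => (n:ℝ) * g n y) := (hS2.mul_left y).congr hyg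
    have hyA : y * ∑' n, g' n y = ∑' (n : ℕ), (n:ℝ) * g n y := by
      rw [← tsum_mul_left]
      exact tsum_congr hyg
    have hA2 : ∑' n, g' n y = -z * ∑' n, g n y - ∑' (n : ℕ), (n:ℝ) * g n y := by
      rw [hA, tsum_congr hterm, Summable.tsum_sub (hS1.mul_left (-z)) hn_sum, tsum_mul_left]
    linear_combination hA2 + hyA
  set F : ℝ → ℝ := fun y => (∑' n, g n y) * (1 + y) ^ z with hF
  have hFderiv : ∀ y ∈ Ioo (-r) r, HasDerivAt F 0 y := by
    intro y hy
    have h1y : (0:ℝ) < 1 + y := by have := hy.1; simp only [neg_lt] at this ⊢; nlinarith [hr1]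
    have hd1 := hf y hy
    have hd2 : HasDerivAt (fun w : ℝ => (1 + w) ^ z) (z * (1 + y) ^ (z - 1)) y := by
      have h := Real.hasDerivAt_rpow_const (x := 1 + y) (p := z) (Or.inl h1y.ne')
      have h2 := h.comp y ((hasDerivAt_id y).const_add 1)
      simpa [Function.comp_def] using h2
    have hmul := hd1.mul hd2
    have hode := hODE y hy
    have hpow : (1 + y) ^ z = (1 + y) ^ (z - 1) * (1 + y) := by
      rw [Real.rpow_sub_one h1y.ne', div_mul_cancel₀ _ h1y.ne']
    have h0 : (∑' n, g' n y) * (1 + y) ^ z + (∑' n, g n y) * (z * (1 + y) ^ (z - 1)) = 0 := by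
      rw [hpow]
      linear_combination ((1 + y) ^ (z - 1)) * hode
    rw [h0] at hmul
    exact hmul
  have hmem : ∀ x ∈ Icc (0:ℝ) t, x ∈ Ioo (-r) r := fun x hx =>
    ⟨by have := hx.1; linarith, lt_of_le_of_lt hx.2 htr⟩
  have hcont : ContinuousOn F (Icc 0 t) := fun x hx =>
    ((hFderiv x (hmem x hx)).continuousAt).continuousWithinAt
  have hF0' : ∀ x ∈ Ico (0:ℝ) t, HasDerivWithinAt F 0 (Ici x) x := fun x hx =>
    (hFderiv x (hmem x ⟨hx.1, hx.2.le⟩)).hasDerivWithinAt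
  have hconst := constant_of_has_deriv_right_zero hcont hF0' t (right_mem_Icc.mpr ht0.le)
  have hF0val : F 0 = 1 := by
    simp only [hF]
    rw [add_zero, Real.one_rpow, mul_one]
    rw [tsum_eq_single 0 (fun n hn => by simp [hg, zero_pow hn])]
    simp [hg, P_zero hz]
  have htmem : t ∈ Ioo (-r) r := ⟨by linarith, htr⟩
  have hSum := hSg t htmem
  have h1t : (0:ℝ) < 1 + t := by linarith
  have hppos : (0:ℝ) < (1 + t) ^ z := Real.rpow_pos_of_pos h1t z
  have hval : ∑' n, g n t = (1 + t) ^ (-z) := by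
    have h : (∑' n, g n t) * (1 + t) ^ z = 1 := by
      have := hconst.trans hF0val
      simpa [hF] using this
    rw [Real.rpow_neg h1t.le]
    field_simp
    linarith [h]
  have hfin : HasSum (fun n => g n t) ((1 + t) ^ (-z)) := hval ▸ hSum.hasSum
  simpa [hg] using hfin


lemma gammaSeq_key {z : ℝ} (hz : 0 < z) (n : ℕ) :
    P z n * ((z + n) * Real.GammaSeq z n) = (n:ℝ) ^ z := by
  have hg : Real.Gamma z ≠ 0 := (Real.Gamma_pos_of_pos hz).ne'
  have hprod : ∏ j ∈ Finset.range (n + 1), (z + (j:ℕ)) =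
      Real.Gamma (z + (n:ℝ) + 1) / Real.Gamma z := by
    induction n with
    | zero =>
      norm_num
      rw [Real.Gamma_add_one hz.ne', mul_div_assoc, div_self hg, mul_one]
    | succ m ih =>
      rw [Finset.prod_range_succ, ih]
      have hzm : z + (m:ℝ) + 1 ≠ 0 := by positivity
      have h2 : Real.Gamma (z + ((m:ℕ)+1:ℕ) + 1) = (z + m + 1) * Real.Gamma (z + m + 1) := by
        have hc : z + (((m:ℕ)+1:ℕ):ℝ) + 1 = (z + (m:ℝ) + 1) + 1 := by push_cast; ring
        rw [hc, Real.Gamma_add_one hzm]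
      rw [h2]
      push_cast
      field_simp
      ring
  have hGn : Real.Gamma (z + n) ≠ 0 := (Real.Gamma_pos_of_pos (by positivity)).ne'
  have hGamma1 : Real.Gamma (z + (n:ℝ) + 1) = (z + n) * Real.Gamma (z + n) :=
    Real.Gamma_add_one (by positivity)
  have hfn : (n.factorial:ℝ) ≠ 0 := by positivity
  have hzn : z + (n:ℝ) ≠ 0 := by positivity
  rw [Real.GammaSeq, hprod, hGamma1, P]
  field_simp

lemma summable_norm {z s : ℝ} (hz : 0 < z) (hzs : z < s) :
    Summable (fun n : ℕ => P z n / (2 * n + z) ^ s) := by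
  have hG : 0 < Real.Gamma z := Real.Gamma_pos_of_pos hz
  have hev : ∀ᶠ n : ℕ in atTop, Real.Gamma z / 2 < Real.GammaSeq z n :=
    (Real.GammaSeq_tendsto_Gamma z).eventually_const_lt (by linarith)
  have hbound : ∀ᶠ n : ℕ in atTop,
      P z n / (2 * n + z) ^ s ≤ (2 / Real.Gamma z) * (n:ℝ) ^ (z - 1 - s) := by
    filter_upwards [hev, eventually_ge_atTop 1] with n hn hn1
    have hnpos : (0:ℝ) < n := by exact_mod_cast hn1
    have hzn : (0:ℝ) < z + n := by positivity
    have hGS : 0 < Real.GammaSeq z n := lt_trans (by positivity) hn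
    have hkey := gammaSeq_key hz n
    have h2nz : (0:ℝ) < 2 * n + z := by positivity
    have hPn : P z n = (n:ℝ) ^ z / ((z + n) * Real.GammaSeq z n) := by
      rw [eq_div_iff (by positivity)]
      linarith [hkey]
    have hrs : (n:ℝ) ^ s ≤ (2 * n + z) ^ s :=
      Real.rpow_le_rpow hnpos.le (by linarith) (by linarith)
    have hnums : (0:ℝ) < (n:ℝ) ^ s := Real.rpow_pos_of_pos hnpos s
    have hnz : (0:ℝ) < (n:ℝ) ^ z := Real.rpow_pos_of_pos hnpos z
    have hdenom : (n:ℝ) * (Real.Gamma z / 2) * (n:ℝ) ^ s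
        ≤ (z + n) * Real.GammaSeq z n * (2 * n + z) ^ s := by
      have h1 : (n:ℝ) * (Real.Gamma z / 2) ≤ (z + n) * Real.GammaSeq z n := by
        have := mul_le_mul (by linarith : (n:ℝ) ≤ z + n) hn.le (by positivity) hzn.le
        linarith
      exact mul_le_mul h1 hrs hnums.le (by positivity)
    have hstep : P z n / (2 * n + z) ^ s
        ≤ (n:ℝ) ^ z / ((n:ℝ) * (Real.Gamma z / 2) * (n:ℝ) ^ s) := by
      rw [hPn, div_div]
      exact div_le_div_of_nonneg_left hnz.le (by positivity) hdenom
    refine hstep.trans (le_of_eq ?_)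
    rw [show z - 1 - s = z - (1 + s) by ring, Real.rpow_sub hnpos, Real.rpow_add hnpos,
      Real.rpow_one]
    field_simp
  have hsum : Summable (fun n : ℕ => (2 / Real.Gamma z) * (n:ℝ) ^ (z - 1 - s)) :=
    (Real.summable_nat_rpow.mpr (by linarith)).mul_left _
  obtain ⟨N, hN⟩ := eventually_atTop.mp hbound
  refine (summable_nat_add_iff N).mp ?_
  refine Summable.of_nonneg_of_le (fun n => ?_) (fun n => hN (n + N) (Nat.le_add_left N n))
    ((summable_nat_add_iff N).mpr hsum)
  have h1 := P_pos hz (n + N)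
  have h2 : (0:ℝ) < (2 * ((n + N : ℕ):ℝ) + z) ^ s := Real.rpow_pos_of_pos (by positivity) s
  positivity


lemma integrable_rpow_exp {a b : ℝ} (ha : 0 < a) (hb : 0 < b) :
    IntegrableOn (fun x : ℝ => x ^ (a - 1) * Real.exp (-(b * x))) (Ioi 0) := by
  have h := Real.GammaIntegral_convergent ha
  rw [← mul_zero b, ← integrableOn_Ioi_comp_mul_left_iff _ _ hb] at h
  have hbne : (b:ℝ) ^ (a - 1) ≠ 0 := (Real.rpow_pos_of_pos hb _).ne'
  refine IntegrableOn.congr_fun (h.const_mul ((b:ℝ) ^ (a - 1))⁻¹) (fun x hx => ?_)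
    measurableSet_Ioi
  have hx0 : (0:ℝ) < x := hx
  rw [Real.mul_rpow hb.le hx0.le]
  field_simp

end GenBeta

open GenBeta

/-- Series expansion of the generalized Dirichlet beta function:
for `z > 0`, `s > z`,
`(1/Γ(s)) ∫₀^∞ x^{s-1} cosh(x)^{-z} dx = 2^z Σ (-1)^n (z)_n / (n! (2n+z)^s)`,
where the Pochhammer symbol `(z)_n = Γ(z+n)/Γ(z)`. -/
theorem generalized_beta_series (z s : ℝ) (hz : 0 < z) (hs : z < s) :
    (1 / Real.Gamma s) * ∫ x in Set.Ioi (0 : ℝ), x ^ (s - 1) / Real.cosh x ^ z =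
      2 ^ z * ∑' n : ℕ,
        (-1) ^ n * (Real.Gamma (z + n) / Real.Gamma z) /
          ((n.factorial : ℝ) * (2 * n + z) ^ s) := by
  have hs0 : 0 < s := lt_trans hz hs
  have hG : 0 < Real.Gamma s := Real.Gamma_pos_of_pos hs0
  set F : ℕ → ℝ → ℝ :=
    fun n x => x ^ (s - 1) * ((-1) ^ n * P z n * Real.exp (-((2 * n + z) * x))) with hF
  have hb : ∀ n : ℕ, (0:ℝ) < 2 * n + z := fun n => by positivity
  have hInt : ∀ n : ℕ, IntegrableOn (F n) (Ioi 0) := by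
    intro n
    refine IntegrableOn.congr_fun ((integrable_rpow_exp hs0 (hb n)).const_mul
      ((-1) ^ n * P z n)) (fun x hx => by simp only [hF]; ring) measurableSet_Ioi
  have hnorm : ∀ n : ℕ,
      (∫ x in Ioi (0:ℝ), ‖F n x‖) = Real.Gamma s * (P z n / (2 * n + z) ^ s) := by
    intro n
    have h1 : ∀ x ∈ Ioi (0:ℝ), ‖F n x‖
        = P z n * (x ^ (s - 1) * Real.exp (-((2 * n + z) * x))) := by
      intro x hx
      have hx0 : (0:ℝ) < x := hx
      have hP := P_pos hz n
      simp only [hF]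
      rw [Real.norm_eq_abs, abs_mul, abs_mul, abs_mul, abs_pow, abs_neg, abs_one, one_pow,
        one_mul, abs_of_pos hP, abs_of_pos (Real.exp_pos _),
        abs_of_nonneg (Real.rpow_nonneg hx0.le _)]
      ring
    rw [setIntegral_congr_fun measurableSet_Ioi h1, MeasureTheory.integral_const_mul,
      integral_rpow_mul_exp_neg_mul_Ioi hs0 (hb n), one_div, Real.inv_rpow (hb n).le]
    rw [div_eq_mul_inv]
    ring
  have hSum : Summable (fun n : ℕ => ∫ x in Ioi (0:ℝ), ‖F n x‖) := by
    simp only [hnorm]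
    exact (summable_norm hz hs).mul_left _
  have key := MeasureTheory.hasSum_integral_of_summable_integral_norm hInt hSum
  have hpt : ∀ x ∈ Ioi (0:ℝ),
      (∑' n, F n x) = x ^ (s - 1) * ((2:ℝ) ^ (-z) * Real.cosh x ^ (-z)) := by
    intro x hx
    have hx0 : (0:ℝ) < x := hx
    set t : ℝ := Real.exp (-(2 * x)) with htdef
    have ht0 : 0 < t := Real.exp_pos _
    have ht1 : t < 1 := by rw [htdef, Real.exp_lt_one_iff]; linarith
    have hbin := hasSum_binomial hz ht0 ht1
    have hmul := hbin.mul_right (Real.exp (-(z * x)))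
    have hterm : ∀ n : ℕ, (-1) ^ n * P z n * t ^ n * Real.exp (-(z * x))
        = (-1) ^ n * P z n * Real.exp (-((2 * n + z) * x)) := by
      intro n
      rw [htdef, ← Real.exp_nat_mul,
        show -((2 * (n:ℝ) + z) * x) = (n:ℝ) * -(2 * x) + -(z * x) by push_cast; ring,
        Real.exp_add]
      ring
    have hval : (1 + t) ^ (-z) * Real.exp (-(z * x))
        = (2:ℝ) ^ (-z) * Real.cosh x ^ (-z) := by
      have he : Real.exp (-(z * x)) = Real.exp x ^ (-z) := by
        rw [← Real.exp_mul]; congr 1; ring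
      have h1t : (0:ℝ) ≤ 1 + t := by linarith
      rw [he, ← Real.mul_rpow h1t (Real.exp_pos x).le]
      have hc : (1 + t) * Real.exp x = 2 * Real.cosh x := by
        rw [htdef, Real.cosh_eq, add_mul, one_mul, ← Real.exp_add]
        have : -(2 * x) + x = -x := by ring
        rw [this]
        ring
      rw [hc, Real.mul_rpow (by norm_num : (0:ℝ) ≤ 2) (Real.cosh_pos x).le]
    have hhs : HasSum (fun n : ℕ => (-1) ^ n * P z n * Real.exp (-((2 * n + z) * x)))
        ((2:ℝ) ^ (-z) * Real.cosh x ^ (-z)) := by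
      simpa only [hterm, hval] using hmul
    simp only [hF]
    rw [tsum_mul_left, hhs.tsum_eq]
  have hIeq : (∫ x in Ioi (0:ℝ), ∑' n, F n x)
      = ∫ x in Ioi (0:ℝ), x ^ (s - 1) * ((2:ℝ) ^ (-z) * Real.cosh x ^ (-z)) :=
    setIntegral_congr_fun measurableSet_Ioi hpt
  have hIeq2 : (∫ x in Ioi (0:ℝ), x ^ (s - 1) / Real.cosh x ^ z)
      = (2:ℝ) ^ z * ∫ x in Ioi (0:ℝ), ∑' n, F n x := by
    rw [hIeq, ← MeasureTheory.integral_const_mul]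
    refine setIntegral_congr_fun measurableSet_Ioi (fun x hx => ?_)
    have e1 : (2:ℝ) ^ (-z) = ((2:ℝ) ^ z)⁻¹ := Real.rpow_neg (by norm_num) z
    have e2 : Real.cosh x ^ (-z) = (Real.cosh x ^ z)⁻¹ :=
      Real.rpow_neg (Real.cosh_pos x).le z
    have h2 : ((2:ℝ) ^ z) ≠ 0 := (Real.rpow_pos_of_pos two_pos z).ne'
    have h3 : (Real.cosh x ^ z) ≠ 0 := (Real.rpow_pos_of_pos (Real.cosh_pos x) z).ne'
    rw [e1, e2, div_eq_mul_inv]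
    field_simp
  have hterm_int : ∀ n : ℕ, (∫ x in Ioi (0:ℝ), F n x)
      = Real.Gamma s * ((-1) ^ n * P z n / (2 * n + z) ^ s) := by
    intro n
    have h1 : ∀ x : ℝ, F n x
        = ((-1) ^ n * P z n) * (x ^ (s - 1) * Real.exp (-((2 * n + z) * x))) := by
      intro x; simp only [hF]; ring
    simp only [h1]
    rw [MeasureTheory.integral_const_mul, integral_rpow_mul_exp_neg_mul_Ioi hs0 (hb n), one_div,
      Real.inv_rpow (hb n).le]
    rw [div_eq_mul_inv]
    ring
  have key2 : HasSum (fun n : ℕ => Real.Gamma s * ((-1) ^ n * P z n / (2 * n + z) ^ s))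
      (∫ x in Ioi (0:ℝ), ∑' n, F n x) := by
    simpa only [hterm_int] using key
  have htsum := key2.tsum_eq
  rw [tsum_mul_left] at htsum
  have hTT : (∑' n : ℕ, (-1) ^ n * (Real.Gamma (z + n) / Real.Gamma z) /
          ((n.factorial : ℝ) * (2 * n + z) ^ s))
      = ∑' n : ℕ, (-1) ^ n * P z n / (2 * n + z) ^ s := by
    refine tsum_congr fun n => ?_
    rw [P]
    have hg : Real.Gamma z ≠ 0 := (Real.Gamma_pos_of_pos hz).ne'
    have hf : (n.factorial : ℝ) ≠ 0 := by positivity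
    have hp : ((2:ℝ) * n + z) ^ s ≠ 0 := (Real.rpow_pos_of_pos (hb n) s).ne'
    field_simp
  rw [hIeq2, hTT, ← htsum]
  field_simp
end

section
/- For real z > 0 and real s with s > z, the generalized Riemann zeta function ζ(z,s) = (1/Γ(s)) ∫₀^∞ x^{s-1}/sinh^z(x) dx admits the series expansion ζ(z,s) = 2^z Σ_{n=0}^∞ (z)_n / (n! (2n+z)^s). -/
open MeasureTheory Real Set

private lemma lint_gamma {a r : ℝ} (ha : 0 < a) (hr : 0 < r) :
    ∫⁻ x in Ioi (0:ℝ), ENNReal.ofReal (x ^ (a - 1) * Real.exp (-(r * x)))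
      = ENNReal.ofReal ((1 / r) ^ a * Real.Gamma a) := by
  rw [← Real.integral_rpow_mul_exp_neg_mul_Ioi ha hr,
    ← ofReal_integral_eq_lintegral_ofReal]
  · have h := integrableOn_rpow_mul_exp_neg_mul_rpow (p := 1) (s := a - 1) (b := r)
      (by linarith) one_pos hr
    simpa [Real.rpow_one, neg_mul, IntegrableOn] using h
  · filter_upwards [self_mem_ae_restrict (measurableSet_Ioi : MeasurableSet (Ioi (0:ℝ)))]
      with x hx
    have hx' : (0:ℝ) < x := hx
    positivity

private lemma tsum_exp_ofReal {c : ℝ} (hc : 0 ≤ c) :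
    ∑' n : ℕ, ENNReal.ofReal (c ^ n / n.factorial) = ENNReal.ofReal (Real.exp c) := by
  rw [← ENNReal.ofReal_tsum_of_nonneg (fun n => by positivity)
    (Real.summable_pow_div_factorial c)]
  congr 1
  rw [Real.exp_eq_exp_ℝ, NormedSpace.exp_eq_tsum_div]

private lemma binom_series {z t : ℝ} (hz : 0 < z) (ht0 : 0 ≤ t) (ht1 : t < 1) :
    ∑' n : ℕ, ENNReal.ofReal (Real.Gamma (z + n) / (Real.Gamma z * n.factorial) * t ^ n)
      = ENNReal.ofReal ((1 - t) ^ (-z)) := by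
  have hΓz : 0 < Real.Gamma z := Real.Gamma_pos_of_pos hz
  have h1t : 0 < 1 - t := by linarith
  have hterm : ∀ n : ℕ,
      ENNReal.ofReal (Real.Gamma (z + n) / (Real.Gamma z * n.factorial) * t ^ n)
        = ∫⁻ u in Ioi (0:ℝ), ENNReal.ofReal
            (t ^ n / (Real.Gamma z * n.factorial) * (u ^ (z + n - 1) * Real.exp (-(1 * u)))) := by
    intro n
    have hc : (0:ℝ) ≤ t ^ n / (Real.Gamma z * n.factorial) := by positivity
    simp_rw [ENNReal.ofReal_mul hc]
    rw [lintegral_const_mul' _ _ ENNReal.ofReal_ne_top,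
      lint_gamma (by positivity : (0:ℝ) < z + n) one_pos,
      ← ENNReal.ofReal_mul hc]
    congr 1
    rw [one_div_one, Real.one_rpow, one_mul]
    ring
  calc ∑' n : ℕ, ENNReal.ofReal (Real.Gamma (z + n) / (Real.Gamma z * n.factorial) * t ^ n)
      = ∑' n : ℕ, ∫⁻ u in Ioi (0:ℝ), ENNReal.ofReal
          (t ^ n / (Real.Gamma z * n.factorial) * (u ^ (z + n - 1) * Real.exp (-(1 * u)))) :=
        tsum_congr hterm
    _ = ∫⁻ u in Ioi (0:ℝ), ∑' n : ℕ, ENNReal.ofReal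
          (t ^ n / (Real.Gamma z * n.factorial) * (u ^ (z + n - 1) * Real.exp (-(1 * u)))) :=
        (lintegral_tsum fun n => by fun_prop).symm
    _ = ∫⁻ u in Ioi (0:ℝ), ENNReal.ofReal
          (1 / Real.Gamma z * (u ^ (z - 1) * Real.exp (-((1 - t) * u)))) := by
        refine setLIntegral_congr_fun measurableSet_Ioi (fun u hu => ?_)
        have hu' : (0:ℝ) < u := hu
        have key : ∀ n : ℕ,
            t ^ n / (Real.Gamma z * n.factorial) * (u ^ (z + n - 1) * Real.exp (-(1 * u)))
              = (1 / Real.Gamma z * (u ^ (z - 1) * Real.exp (-u))) * ((t * u) ^ n / n.factorial) := by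
          intro n
          have h1 : u ^ (z + (n:ℝ) - 1) = u ^ (z - 1) * u ^ n := by
            rw [show z + (n:ℝ) - 1 = (z - 1) + n by ring, Real.rpow_add hu',
              Real.rpow_natCast]
          rw [h1, mul_pow, one_mul]
          ring
        simp_rw [key]
        have hA : (0:ℝ) ≤ 1 / Real.Gamma z * (u ^ (z - 1) * Real.exp (-u)) := by positivity
        simp_rw [ENNReal.ofReal_mul hA]
        rw [ENNReal.tsum_mul_left, tsum_exp_ofReal (by positivity), ← ENNReal.ofReal_mul hA]
        congr 1
        rw [show -((1 - t) * u) = -u + t * u by ring, Real.exp_add]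
        ring
    _ = ENNReal.ofReal (1 / Real.Gamma z)
          * ENNReal.ofReal ((1 / (1 - t)) ^ z * Real.Gamma z) := by
        simp_rw [ENNReal.ofReal_mul (by positivity : (0:ℝ) ≤ 1 / Real.Gamma z)]
        rw [lintegral_const_mul' _ _ ENNReal.ofReal_ne_top, lint_gamma hz h1t]
    _ = ENNReal.ofReal ((1 - t) ^ (-z)) := by
        rw [← ENNReal.ofReal_mul (by positivity)]
        congr 1
        rw [one_div (1-t), Real.inv_rpow h1t.le, Real.rpow_neg h1t.le]
        field_simp

/-- Series expansion of the generalized Riemann zeta function: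
for `s > z > 0`,
`(1/Γ(s)) ∫₀^∞ x^{s-1} sinh(x)^{-z} dx = 2^z Σ (z)_n / (n! (2n+z)^s)`,
where the Pochhammer symbol `(z)_n = Γ(z+n)/Γ(z)`. -/
theorem generalized_zeta_series (z s : ℝ) (hz : 0 < z) (hs : z < s) :
    (1 / Real.Gamma s) * ∫ x in Set.Ioi (0 : ℝ), x ^ (s - 1) / Real.sinh x ^ z =
      2 ^ z * ∑' n : ℕ,
        (Real.Gamma (z + n) / Real.Gamma z) /
          ((n.factorial : ℝ) * (2 * n + z) ^ s) := by
  have hs0 : 0 < s := hz.trans hs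
  have hΓs : 0 < Real.Gamma s := Real.Gamma_pos_of_pos hs0
  have hΓz : 0 < Real.Gamma z := Real.Gamma_pos_of_pos hz
  set a : ℕ → ℝ := fun n => Real.Gamma (z + n) / (Real.Gamma z * n.factorial) with ha
  have han : ∀ n, 0 ≤ a n := fun n => by
    have := Real.Gamma_nonneg_of_nonneg (by positivity : (0:ℝ) ≤ z + n)
    rw [ha]; positivity
  have key : ∫⁻ x in Ioi (0:ℝ), ENNReal.ofReal (x ^ (s - 1) / Real.sinh x ^ z)
      = ∑' n : ℕ, ENNReal.ofReal
          ((2:ℝ) ^ z * a n * ((1 / (2 * n + z)) ^ s * Real.Gamma s)) := by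
    calc ∫⁻ x in Ioi (0:ℝ), ENNReal.ofReal (x ^ (s - 1) / Real.sinh x ^ z)
        = ∫⁻ x in Ioi (0:ℝ), ∑' n : ℕ, ENNReal.ofReal
            ((2:ℝ) ^ z * a n * (x ^ (s - 1) * Real.exp (-((2 * n + z) * x)))) := by
          refine setLIntegral_congr_fun measurableSet_Ioi (fun x hx => ?_)
          have hx' : (0:ℝ) < x := hx
          have ht0 : (0:ℝ) ≤ Real.exp (-(2 * x)) := (Real.exp_pos _).le
          have ht1 : Real.exp (-(2 * x)) < 1 := by
            rw [Real.exp_lt_one_iff]; linarith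
          have h1t : (0:ℝ) < 1 - Real.exp (-(2 * x)) := by linarith
          have hsinh : Real.sinh x ^ z
              = Real.exp (x * z) * (1 - Real.exp (-(2 * x))) ^ z / 2 ^ z := by
            have h0 : Real.sinh x = Real.exp x * (1 - Real.exp (-(2 * x))) / 2 := by
              rw [Real.sinh_eq]
              have : Real.exp x * Real.exp (-(2 * x)) = Real.exp (-x) := by
                rw [← Real.exp_add]; ring_nf
              rw [mul_sub, mul_one, this]
            rw [h0, Real.div_rpow (by positivity) (by norm_num),
              Real.mul_rpow (Real.exp_pos _).le h1t.le, ← Real.exp_mul]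
          have hmain : x ^ (s - 1) / Real.sinh x ^ z
              = ((2:ℝ) ^ z * (x ^ (s - 1) * Real.exp (-(z * x))))
                * (1 - Real.exp (-(2 * x))) ^ (-z) := by
            have hxz : Real.exp (-(z * x)) = (Real.exp (x * z))⁻¹ := by
              rw [mul_comm z x, Real.exp_neg]
            rw [hsinh, hxz, Real.rpow_neg h1t.le]
            have he : Real.exp (x * z) ≠ 0 := (Real.exp_pos _).ne'
            have hp2 : ((2:ℝ) ^ z) ≠ 0 := by positivity
            have hpt : ((1 - Real.exp (-(2 * x))) ^ z) ≠ 0 := by positivity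
            field_simp
          rw [hmain, ENNReal.ofReal_mul (by positivity),
            ← binom_series hz ht0 ht1, ← ENNReal.tsum_mul_left]
          refine tsum_congr fun n => ?_
          rw [← ENNReal.ofReal_mul (by positivity)]
          congr 1
          have htn : Real.exp (-(2 * x)) ^ n = Real.exp ((n:ℝ) * (-(2 * x))) :=
            (Real.exp_nat_mul _ n).symm
          have hee : Real.exp (-(z * x)) * Real.exp ((n:ℝ) * (-(2 * x)))
              = Real.exp (-((2 * n + z) * x)) := by
            rw [← Real.exp_add]; ring_nf
          rw [ha]
          calc (2:ℝ) ^ z * (x ^ (s - 1) * Real.exp (-(z * x)))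
                * (Real.Gamma (z + n) / (Real.Gamma z * n.factorial)
                    * Real.exp (-(2 * x)) ^ n)
              = (2:ℝ) ^ z * (Real.Gamma (z + n) / (Real.Gamma z * n.factorial))
                * (x ^ (s - 1) * (Real.exp (-(z * x)) * Real.exp ((n:ℝ) * (-(2 * x))))) := by
                rw [htn]; ring
            _ = (2:ℝ) ^ z * (Real.Gamma (z + n) / (Real.Gamma z * n.factorial))
                * (x ^ (s - 1) * Real.exp (-((2 * n + z) * x))) := by rw [hee]
      _ = ∑' n : ℕ, ∫⁻ x in Ioi (0:ℝ), ENNReal.ofReal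
            ((2:ℝ) ^ z * a n * (x ^ (s - 1) * Real.exp (-((2 * n + z) * x)))) :=
          lintegral_tsum fun n => by fun_prop
      _ = ∑' n : ℕ, ENNReal.ofReal
            ((2:ℝ) ^ z * a n * ((1 / (2 * n + z)) ^ s * Real.Gamma s)) := by
          refine tsum_congr fun n => ?_
          have hc : (0:ℝ) ≤ (2:ℝ) ^ z * a n := by
            have := han n; positivity
          simp_rw [ENNReal.ofReal_mul hc]
          rw [lintegral_const_mul' _ _ ENNReal.ofReal_ne_top,
            lint_gamma hs0 (by positivity : (0:ℝ) < 2 * n + z)]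
  have hb : ∀ n : ℕ, (0:ℝ) < 2 * n + z := fun n => by positivity
  have hterm : ∀ n : ℕ,
      (ENNReal.ofReal ((2:ℝ) ^ z * a n * ((1 / (2 * n + z)) ^ s * Real.Gamma s))).toReal
        = Real.Gamma s * ((2:ℝ) ^ z * ((Real.Gamma (z + n) / Real.Gamma z)
            / ((n.factorial : ℝ) * (2 * n + z) ^ s))) := by
    intro n
    have h1 : (0:ℝ) ≤ (2:ℝ) ^ z * a n * ((1 / (2 * n + z)) ^ s * Real.Gamma s) := by
      have := han n
      have := (hb n)
      positivity
    rw [ENNReal.toReal_ofReal h1, ha, one_div, Real.inv_rpow (hb n).le]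
    have hbs : ((2 * (n:ℝ) + z) ^ s) ≠ 0 := (Real.rpow_pos_of_pos (hb n) s).ne'
    have hfn : ((n.factorial : ℝ)) ≠ 0 := by positivity
    field_simp
  have hLHS : ∫ x in Ioi (0:ℝ), x ^ (s - 1) / Real.sinh x ^ z
      = Real.Gamma s * ((2:ℝ) ^ z * ∑' n : ℕ,
          (Real.Gamma (z + n) / Real.Gamma z) / ((n.factorial : ℝ) * (2 * n + z) ^ s)) := by
    rw [integral_eq_lintegral_of_nonneg_ae, key,
      ENNReal.tsum_toReal_eq (fun n => ENNReal.ofReal_ne_top), tsum_congr hterm,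
      tsum_mul_left, tsum_mul_left]
    · filter_upwards [self_mem_ae_restrict (measurableSet_Ioi : MeasurableSet (Ioi (0:ℝ)))]
        with x hx
      have hx' : (0:ℝ) < x := hx
      exact div_nonneg (Real.rpow_nonneg hx'.le _)
        (Real.rpow_nonneg (Real.sinh_pos_iff.mpr hx').le _)
    · exact ((by fun_prop : Measurable fun x : ℝ =>
        x ^ (s - 1) / Real.sinh x ^ z)).aestronglyMeasurable
  rw [hLHS]
  field_simp
  refine tsum_congr fun n => ?_
  rw [mul_comm (n:ℝ) 2]
end

section
/- For real s > 2 and real z > 2, the generalized Dirichlet beta function β(z,s) = (1/Γ(s)) ∫₀^∞ x^{s-1}/cosh^z(x) dx satisfies the recurrence β(z,s) = z²·β(z, s+2) − z(z+1)·β(z+2, s+2). -/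
open MeasureTheory Real Set Filter Topology

/-- Exponential bound for negative powers of cosh. -/
lemma cosh_rpow_neg_le {c : ℝ} (hc : 0 < c) (x : ℝ) :
    Real.cosh x ^ (-c) ≤ 2 ^ c * Real.exp (-c * x) := by
  have h2 : (0:ℝ) < Real.exp x / 2 := by positivity
  have h1 : Real.exp x / 2 ≤ Real.cosh x := by
    rw [Real.cosh_eq]
    have := (Real.exp_pos (-x)).le
    linarith
  have hmono : (Real.exp x / 2) ^ c ≤ Real.cosh x ^ c :=
    Real.rpow_le_rpow h2.le h1 hc.le
  have hval : (Real.exp x / 2) ^ c = Real.exp (c * x) / 2 ^ c := by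
    rw [Real.div_rpow (Real.exp_pos x).le (by norm_num : (0:ℝ) ≤ 2),
      Real.rpow_def_of_pos (Real.exp_pos x), Real.log_exp, mul_comm]
  rw [Real.rpow_neg (Real.cosh_pos x).le]
  calc (Real.cosh x ^ c)⁻¹ ≤ ((Real.exp x / 2) ^ c)⁻¹ := by
        apply inv_anti₀ (Real.rpow_pos_of_pos h2 c) hmono
    _ = 2 ^ c * Real.exp (-c * x) := by
        rw [hval, inv_div, div_eq_mul_inv, ← Real.exp_neg, neg_mul]

lemma integrableOn_rpow_mul_cosh_rpow_neg {t c : ℝ} (ht : -1 < t) (hc : 0 < c) :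
    IntegrableOn (fun x : ℝ => x ^ t * Real.cosh x ^ (-c)) (Ioi 0) := by
  have hbase : IntegrableOn (fun x : ℝ => x ^ t * Real.exp (-c * x)) (Ioi 0) := by
    have := integrableOn_rpow_mul_exp_neg_mul_rpow ht (zero_lt_one : (0:ℝ) < 1) hc
    refine this.congr_fun (fun x hx => ?_) measurableSet_Ioi
    simp only [Real.rpow_one]
  refine Integrable.mono' (hbase.const_mul (2 ^ c)) ?_ ?_
  · refine ContinuousOn.aestronglyMeasurable ?_ measurableSet_Ioi
    refine ContinuousOn.mul ?_ ?_
    · exact fun x hx => (Real.continuousAt_rpow_const x t (Or.inl (ne_of_gt hx))).continuousWithinAt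
    · exact (Real.continuous_cosh.rpow_const fun x => Or.inl (Real.cosh_pos x).ne').continuousOn
  · filter_upwards [ae_restrict_mem measurableSet_Ioi] with x hx
    have hx0 : (0:ℝ) < x := hx
    have h1 : 0 ≤ x ^ t := Real.rpow_nonneg hx0.le t
    have h2 : 0 ≤ Real.cosh x ^ (-c) := Real.rpow_nonneg (Real.cosh_pos x).le _
    rw [Real.norm_eq_abs, abs_of_nonneg (by positivity)]
    calc x ^ t * Real.cosh x ^ (-c) ≤ x ^ t * (2 ^ c * Real.exp (-c * x)) :=
          mul_le_mul_of_nonneg_left (cosh_rpow_neg_le hc x) h1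
      _ = 2 ^ c * (x ^ t * Real.exp (-c * x)) := by ring

lemma sinh_mul_cosh_rpow_le {c x : ℝ} (hx : 0 ≤ x) :
    Real.sinh x * Real.cosh x ^ (-(c+1)) ≤ Real.cosh x ^ (-c) := by
  have hc := Real.cosh_pos x
  have key : Real.cosh x * Real.cosh x ^ (-(c+1)) = Real.cosh x ^ (-c) := by
    nth_rewrite 1 [← Real.rpow_one (Real.cosh x)]
    rw [← Real.rpow_add hc]
    norm_num
  calc Real.sinh x * Real.cosh x ^ (-(c+1))
      ≤ Real.cosh x * Real.cosh x ^ (-(c+1)) :=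
        mul_le_mul_of_nonneg_right (Real.sinh_lt_cosh x).le (Real.rpow_nonneg hc.le _)
    _ = Real.cosh x ^ (-c) := key

lemma sinh_nonneg_of_nonneg {x : ℝ} (hx : 0 ≤ x) : 0 ≤ Real.sinh x := by
  simpa using Real.sinh_le_sinh.mpr hx

lemma hasDerivAt_cosh_rpow_neg (z x : ℝ) :
    HasDerivAt (fun y => Real.cosh y ^ (-z))
      (-(z * (Real.sinh x * Real.cosh x ^ (-(z+1))))) x := by
  have h := (Real.hasDerivAt_cosh x).rpow_const (p := -z) (Or.inl (Real.cosh_pos x).ne')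
  convert h using 1
  rw [show -z - 1 = -(z+1) by ring]
  ring

lemma hasDerivAt_G (z x : ℝ) :
    HasDerivAt (fun y => -(z * (Real.sinh y * Real.cosh y ^ (-(z+1)))))
      (z^2 * Real.cosh x ^ (-z) - z*(z+1) * Real.cosh x ^ (-(z+2))) x := by
  have hc := Real.cosh_pos x
  have h1 : HasDerivAt (fun y => Real.sinh y * Real.cosh y ^ (-(z+1)))
      (Real.cosh x * Real.cosh x ^ (-(z+1)) +
        Real.sinh x * (Real.sinh x * (-(z+1)) * Real.cosh x ^ (-(z+1) - 1))) x :=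
    (Real.hasDerivAt_sinh x).mul
      ((Real.hasDerivAt_cosh x).rpow_const (Or.inl hc.ne'))
  have h2 := (h1.const_mul z).neg
  refine HasDerivAt.congr_deriv h2 (Eq.symm ?_)
  have e2 : Real.cosh x ^ (-(z+1) - 1) = Real.cosh x ^ (-(z+2)) := by
    rw [show -(z+1) - 1 = -(z+2) by ring]
  have eA : Real.cosh x * Real.cosh x ^ (-(z+1)) = Real.cosh x ^ (-z) := by
    nth_rewrite 1 [← Real.rpow_one (Real.cosh x)]
    rw [← Real.rpow_add hc]; norm_num
  have eB : Real.sinh x * Real.sinh x * Real.cosh x ^ (-(z+2))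
      = Real.cosh x ^ (-z) - Real.cosh x ^ (-(z+2)) := by
    have hs : Real.sinh x * Real.sinh x = Real.cosh x ^ (2:ℕ) - 1 := by
      have := Real.sinh_sq x; rw [← this]; ring
    have e3 : Real.cosh x ^ (2:ℕ) * Real.cosh x ^ (-(z+2)) = Real.cosh x ^ (-z) := by
      rw [← Real.rpow_natCast (Real.cosh x) 2, ← Real.rpow_add hc]
      norm_num
    rw [hs, sub_mul, e3, one_mul]
  rw [e2, eA]
  linear_combination (-(z*(z+1))) * eB

lemma tendsto_rpow_mul_cosh_neg_atTop {c : ℝ} (hc : 0 < c) (p : ℝ) :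
    Tendsto (fun x : ℝ => x ^ p * Real.cosh x ^ (-c)) atTop (𝓝 0) := by
  have hg : Tendsto (fun x : ℝ => 2 ^ c * (x ^ p * Real.exp (-c * x))) atTop (𝓝 0) := by
    have := (tendsto_rpow_mul_exp_neg_mul_atTop_nhds_zero p c hc).const_mul (2 ^ c : ℝ)
    simpa using this
  refine squeeze_zero_norm' ?_ hg
  filter_upwards [eventually_ge_atTop (0:ℝ)] with x hx
  have h1 : 0 ≤ x ^ p := Real.rpow_nonneg hx p
  have h2 : 0 ≤ Real.cosh x ^ (-c) := Real.rpow_nonneg (Real.cosh_pos x).le _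
  rw [Real.norm_eq_abs, abs_of_nonneg (by positivity)]
  calc x ^ p * Real.cosh x ^ (-c) ≤ x ^ p * (2 ^ c * Real.exp (-c * x)) :=
        mul_le_mul_of_nonneg_left (cosh_rpow_neg_le hc x) h1
    _ = 2 ^ c * (x ^ p * Real.exp (-c * x)) := by ring

lemma tendsto_rpow_mul_cont_nhdsGT {p : ℝ} (hp : 0 < p) {h : ℝ → ℝ} (hh : Continuous h) :
    Tendsto (fun x : ℝ => x ^ p * h x) (nhdsWithin 0 (Ioi 0)) (𝓝 0) := by
  have h1 : Tendsto (fun x : ℝ => x ^ p) (nhdsWithin 0 (Ioi 0)) (𝓝 0) := by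
    have := (Real.continuousAt_rpow_const 0 p (Or.inr hp.le)).continuousWithinAt (s := Ioi 0)
    simpa [ContinuousWithinAt, Real.zero_rpow hp.ne'] using this
  have := h1.mul (hh.continuousAt.continuousWithinAt (s := Ioi 0))
  simpa using this

/-- The generalized Dirichlet beta function. -/
noncomputable def genBeta (z s : ℝ) : ℝ :=
  (1 / Real.Gamma s) * ∫ x in Set.Ioi (0 : ℝ), x ^ (s - 1) / Real.cosh x ^ z

/-- Recurrence relation `β(z,s) = z² β(z,s+2) − z(z+1) β(z+2,s+2)` for `z, s > 2`. -/
theorem genBeta_recurrence (z s : ℝ) (hz : 2 < z) (hs : 2 < s) :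
    genBeta z s = z ^ 2 * genBeta z (s + 2) - z * (z + 1) * genBeta (z + 2) (s + 2) := by
  have hs0 : (0:ℝ) < s := by linarith
  have hz0 : (0:ℝ) < z := by linarith
  have hcz : (0:ℝ) < z + 2 := by linarith
  -- abbreviations as plain lambdas
  -- integrability facts
  have I1 : IntegrableOn (fun x : ℝ => x ^ (s+1) * Real.cosh x ^ (-z)) (Ioi 0) :=
    integrableOn_rpow_mul_cosh_rpow_neg (by linarith) hz0
  have I2 : IntegrableOn (fun x : ℝ => x ^ (s+1) * Real.cosh x ^ (-(z+2))) (Ioi 0) :=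
    integrableOn_rpow_mul_cosh_rpow_neg (by linarith) hcz
  have I3 : IntegrableOn (fun x : ℝ => x ^ s * Real.cosh x ^ (-z)) (Ioi 0) :=
    integrableOn_rpow_mul_cosh_rpow_neg (by linarith) hz0
  have I4 : IntegrableOn (fun x : ℝ => x ^ (s-1) * Real.cosh x ^ (-z)) (Ioi 0) :=
    integrableOn_rpow_mul_cosh_rpow_neg (by linarith) hz0
  have GcontAux : Continuous (fun x : ℝ => Real.sinh x * Real.cosh x ^ (-(z+1))) :=
    Real.continuous_sinh.mul
      (Real.continuous_cosh.rpow_const fun x => Or.inl (Real.cosh_pos x).ne')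
  have Gcont : Continuous (fun x : ℝ => -(z * (Real.sinh x * Real.cosh x ^ (-(z+1))))) :=
    (continuous_const.mul GcontAux).neg
  have Gbound : ∀ x : ℝ, 0 ≤ x →
      |(-(z * (Real.sinh x * Real.cosh x ^ (-(z+1)))))| ≤ z * Real.cosh x ^ (-z) := by
    intro x hx
    have h1 : 0 ≤ Real.sinh x := sinh_nonneg_of_nonneg hx
    have h2 : 0 ≤ Real.cosh x ^ (-(z+1)) := Real.rpow_nonneg (Real.cosh_pos x).le _
    rw [abs_neg, abs_of_nonneg (by positivity)]
    exact mul_le_mul_of_nonneg_left (sinh_mul_cosh_rpow_le hx) hz0.le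
  -- integrability of products with G
  have IpowG : ∀ p : ℝ, 0 < p → IntegrableOn (fun x : ℝ => x ^ p * Real.cosh x ^ (-z)) (Ioi 0) →
      IntegrableOn
        (fun x : ℝ => x ^ p * (-(z * (Real.sinh x * Real.cosh x ^ (-(z+1)))))) (Ioi 0) := by
    intro p hp hbase
    refine Integrable.mono' (hbase.const_mul z) ?_ ?_
    · refine ContinuousOn.aestronglyMeasurable (ContinuousOn.mul ?_ Gcont.continuousOn)
        measurableSet_Ioi
      exact fun x hx =>
        (Real.continuousAt_rpow_const x p (Or.inl (ne_of_gt hx))).continuousWithinAt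
    · filter_upwards [ae_restrict_mem measurableSet_Ioi] with x hx
      have hx0 : (0:ℝ) < x := hx
      have h1 : 0 ≤ x ^ p := Real.rpow_nonneg hx0.le p
      rw [norm_mul, Real.norm_eq_abs, Real.norm_eq_abs, abs_of_nonneg h1]
      calc x ^ p * |(-(z * (Real.sinh x * Real.cosh x ^ (-(z+1)))))|
          ≤ x ^ p * (z * Real.cosh x ^ (-z)) :=
            mul_le_mul_of_nonneg_left (Gbound x hx0.le) h1
        _ = z * (x ^ p * Real.cosh x ^ (-z)) := by ring
  have IG1 : IntegrableOn (fun x : ℝ =>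
      x ^ (s+1) * (z^2 * Real.cosh x ^ (-z) - z*(z+1) * Real.cosh x ^ (-(z+2)))) (Ioi 0) := by
    exact IntegrableOn.congr_fun ((I1.const_mul (z^2)).sub (I2.const_mul (z*(z+1))))
      (fun x _ => by simp only [Pi.sub_apply, Pi.mul_apply]; ring) measurableSet_Ioi
  -- step 1 : integration by parts with u = x^(s+1), v = G
  have step1 : (∫ x in Ioi (0:ℝ),
        x ^ (s+1) * (z^2 * Real.cosh x ^ (-z) - z*(z+1) * Real.cosh x ^ (-(z+2))))
      = (0:ℝ) - 0 - ∫ x in Ioi (0:ℝ),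
        ((s+1) * x ^ s) * (-(z * (Real.sinh x * Real.cosh x ^ (-(z+1))))) := by
    refine integral_Ioi_mul_deriv_eq_deriv_mul (v' := fun x =>
        z^2 * Real.cosh x ^ (-z) - z*(z+1) * Real.cosh x ^ (-(z+2))) ?_ ?_ ?_ ?_ ?_ ?_
    · intro x hx
      have := Real.hasDerivAt_rpow_const (x := x) (p := s+1) (Or.inl (ne_of_gt hx))
      simpa [show s + 1 - 1 = s by ring] using this
    · exact fun x _ => hasDerivAt_G z x
    · exact IG1
    · exact IntegrableOn.congr_fun ((IpowG s hs0 I3).const_mul (s+1))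
        (fun x _ => by simp only [Pi.sub_apply, Pi.mul_apply]; ring) measurableSet_Ioi
    · exact tendsto_rpow_mul_cont_nhdsGT (p := s+1)
        (h := fun x => -(z * (Real.sinh x * Real.cosh x ^ (-(z+1))))) (by linarith) Gcont
    · refine squeeze_zero_norm'
        (a := fun x => z * (x ^ (s+1) * Real.cosh x ^ (-z))) ?_ ?_
      · filter_upwards [eventually_ge_atTop (0:ℝ)] with x hx
        have h1 : 0 ≤ x ^ (s+1) := Real.rpow_nonneg hx _
        show ‖x ^ (s+1) * _‖ ≤ z * (x ^ (s+1) * Real.cosh x ^ (-z))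
        rw [norm_mul, Real.norm_eq_abs, Real.norm_eq_abs, abs_of_nonneg h1]
        calc x ^ (s+1) * |(-(z * (Real.sinh x * Real.cosh x ^ (-(z+1)))))|
            ≤ x ^ (s+1) * (z * Real.cosh x ^ (-z)) :=
              mul_le_mul_of_nonneg_left (Gbound x hx) h1
          _ = z * (x ^ (s+1) * Real.cosh x ^ (-z)) := by ring
      · simpa using (tendsto_rpow_mul_cosh_neg_atTop hz0 (s+1)).const_mul z
  -- step 2 : integration by parts with u = x^s, v = cosh^(-z)
  have step2 : (∫ x in Ioi (0:ℝ),
        x ^ s * (-(z * (Real.sinh x * Real.cosh x ^ (-(z+1))))))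
      = (0:ℝ) - 0 - ∫ x in Ioi (0:ℝ), (s * x ^ (s-1)) * Real.cosh x ^ (-z) := by
    refine integral_Ioi_mul_deriv_eq_deriv_mul
      (v' := fun x => -(z * (Real.sinh x * Real.cosh x ^ (-(z+1))))) ?_ ?_ ?_ ?_ ?_ ?_
    · intro x hx
      have := Real.hasDerivAt_rpow_const (x := x) (p := s) (Or.inl (ne_of_gt hx))
      simpa using this
    · exact fun x _ => hasDerivAt_cosh_rpow_neg z x
    · exact IpowG s hs0 I3
    · exact IntegrableOn.congr_fun (I4.const_mul s)
        (fun x _ => by simp only [Pi.sub_apply, Pi.mul_apply]; ring) measurableSet_Ioi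
    · exact tendsto_rpow_mul_cont_nhdsGT (p := s) (h := fun x => Real.cosh x ^ (-z)) hs0
        (Real.continuous_cosh.rpow_const fun x => Or.inl (Real.cosh_pos x).ne')
    · exact tendsto_rpow_mul_cosh_neg_atTop hz0 s
  -- pull out constants
  have e1 : (∫ x in Ioi (0:ℝ),
        ((s+1) * x ^ s) * (-(z * (Real.sinh x * Real.cosh x ^ (-(z+1))))))
      = (s+1) * ∫ x in Ioi (0:ℝ),
        x ^ s * (-(z * (Real.sinh x * Real.cosh x ^ (-(z+1))))) := by
    rw [← integral_const_mul]
    exact setIntegral_congr_fun measurableSet_Ioi (fun x _ => by ring)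
  have e2 : (∫ x in Ioi (0:ℝ), (s * x ^ (s-1)) * Real.cosh x ^ (-z))
      = s * ∫ x in Ioi (0:ℝ), x ^ (s-1) * Real.cosh x ^ (-z) := by
    rw [← integral_const_mul]
    exact setIntegral_congr_fun measurableSet_Ioi (fun x _ => by ring)
  have key : (∫ x in Ioi (0:ℝ),
        x ^ (s+1) * (z^2 * Real.cosh x ^ (-z) - z*(z+1) * Real.cosh x ^ (-(z+2))))
      = (s+1) * (s * ∫ x in Ioi (0:ℝ), x ^ (s-1) * Real.cosh x ^ (-z)) := by
    rw [step1, e1, step2, e2]; ring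
  have splitE : (∫ x in Ioi (0:ℝ),
        x ^ (s+1) * (z^2 * Real.cosh x ^ (-z) - z*(z+1) * Real.cosh x ^ (-(z+2))))
      = z^2 * (∫ x in Ioi (0:ℝ), x ^ (s+1) * Real.cosh x ^ (-z))
        - z*(z+1) * (∫ x in Ioi (0:ℝ), x ^ (s+1) * Real.cosh x ^ (-(z+2))) := by
    rw [← integral_const_mul, ← integral_const_mul,
      ← integral_sub (I1.const_mul _) (I2.const_mul _)]
    exact setIntegral_congr_fun measurableSet_Ioi (fun x _ => by ring)
  -- rewrite the genBeta integrands
  have r1 : (∫ x in Ioi (0:ℝ), x ^ (s - 1) / Real.cosh x ^ z)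
      = ∫ x in Ioi (0:ℝ), x ^ (s-1) * Real.cosh x ^ (-z) :=
    setIntegral_congr_fun measurableSet_Ioi (fun x _ => by
      rw [Real.rpow_neg (Real.cosh_pos x).le, div_eq_mul_inv])
  have r2 : (∫ x in Ioi (0:ℝ), x ^ (s + 2 - 1) / Real.cosh x ^ z)
      = ∫ x in Ioi (0:ℝ), x ^ (s+1) * Real.cosh x ^ (-z) :=
    setIntegral_congr_fun measurableSet_Ioi (fun x _ => by
      rw [Real.rpow_neg (Real.cosh_pos x).le, div_eq_mul_inv,
        show s + 2 - 1 = s + 1 by ring])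
  have r3 : (∫ x in Ioi (0:ℝ), x ^ (s + 2 - 1) / Real.cosh x ^ (z+2))
      = ∫ x in Ioi (0:ℝ), x ^ (s+1) * Real.cosh x ^ (-(z+2)) :=
    setIntegral_congr_fun measurableSet_Ioi (fun x _ => by
      rw [Real.rpow_neg (Real.cosh_pos x).le, div_eq_mul_inv,
        show s + 2 - 1 = s + 1 by ring])
  have hΓ2 : Real.Gamma (s+2) = (s+1) * (s * Real.Gamma s) := by
    rw [show s + 2 = (s+1) + 1 by ring,
      Real.Gamma_add_one (by positivity : (0:ℝ) < s + 1).ne',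
      Real.Gamma_add_one hs0.ne']
  have hΓ : Real.Gamma s ≠ 0 := (Real.Gamma_pos_of_pos hs0).ne'
  have hchain := splitE.symm.trans key
  unfold genBeta
  rw [r1, r2, r3, hΓ2]
  field_simp
  linear_combination (-1 : ℝ) * hchain
end

section
/- For real s with s > z + 2 > 2, the generalized Riemann zeta function ζ(z,s) = (1/Γ(s)) ∫₀^∞ x^{s-1}/sinh^z(x) dx satisfies the recurrence ζ(z,s) = z²·ζ(z, s+2) + z(z+1)·ζ(z+2, s+2). -/
open Real MeasureTheory Set Filter Topology

namespace GZAux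

lemma sinh_ge_exp {x : ℝ} (hx : 1 ≤ x) :
    (1 - Real.exp (-2)) / 2 * Real.exp x ≤ Real.sinh x := by
  rw [Real.sinh_eq]
  have h1 : Real.exp (-x) ≤ Real.exp (-2) * Real.exp x := by
    rw [← Real.exp_add]
    exact Real.exp_le_exp.mpr (by linarith)
  nlinarith [Real.exp_pos x]

lemma c_pos : 0 < (1 - Real.exp (-2)) / 2 := by
  have : Real.exp (-2) < 1 := Real.exp_lt_one_iff.mpr (by norm_num)
  linarith

lemma contOn (a b : ℝ) :
    ContinuousOn (fun x => x ^ a * Real.sinh x ^ (-b)) (Ioi (0:ℝ)) := by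
  apply ContinuousOn.mul
  · exact (continuous_id.continuousOn).rpow_const fun x hx => Or.inl (ne_of_gt hx)
  · exact (Real.continuous_sinh.continuousOn).rpow_const
      fun x hx => Or.inl (Real.sinh_pos_iff.mpr hx).ne'

/-- Integrability of `x^a * sinh x ^ (-b)` on `(0,∞)` for `0 < b < a+1`. -/
lemma integrable_aux {a b : ℝ} (hb : 0 < b) (hab : b < a + 1) :
    IntegrableOn (fun x => x ^ a * Real.sinh x ^ (-b)) (Ioi (0:ℝ)) := by
  have h01 : IntegrableOn (fun x => x ^ a * Real.sinh x ^ (-b)) (Ioc (0:ℝ) 1) := by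
    have hint : IntegrableOn (fun x : ℝ => x ^ (a - b)) (Ioc (0:ℝ) 1) := by
      apply ((intervalIntegral.integrableOn_Ioo_rpow_iff (zero_lt_two)).mpr (by linarith)).mono_set
      intro x hx; exact ⟨hx.1, lt_of_le_of_lt hx.2 one_lt_two⟩
    apply hint.mono' (((contOn a b).mono (fun x hx => hx.1)).aestronglyMeasurable measurableSet_Ioc)
    filter_upwards [ae_restrict_mem measurableSet_Ioc] with x hx
    have hx0 : 0 < x := hx.1
    have hS : 0 < Real.sinh x := Real.sinh_pos_iff.mpr hx0
    rw [Real.norm_eq_abs, abs_of_nonneg (by positivity)]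
    calc x ^ a * Real.sinh x ^ (-b) ≤ x ^ a * x ^ (-b) := by
          apply mul_le_mul_of_nonneg_left _ (by positivity)
          exact Real.rpow_le_rpow_of_nonpos hx0 (Real.self_le_sinh_iff.mpr hx0.le) (by linarith)
      _ = x ^ (a - b) := by rw [← Real.rpow_add hx0]; ring_nf
  have h1i : IntegrableOn (fun x => x ^ a * Real.sinh x ^ (-b)) (Ioi (1:ℝ)) := by
    set c : ℝ := (1 - Real.exp (-2)) / 2 with hc
    have hint : IntegrableOn (fun x : ℝ => c ^ (-b) * (x ^ a * Real.exp (-b * x))) (Ioi (1:ℝ)) := by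
      apply Integrable.const_mul
      have base : IntegrableOn (fun x : ℝ => x ^ a * Real.exp (-b * x ^ (1:ℝ))) (Ioi (1:ℝ)) :=
        (integrableOn_rpow_mul_exp_neg_mul_rpow (s := a) (p := 1) (by linarith) zero_lt_one hb).mono_set
          (Ioi_subset_Ioi zero_le_one)
      apply base.congr_fun ?_ measurableSet_Ioi
      intro x hx
      simp only [Real.rpow_one]
    apply hint.mono' (((contOn a b).mono (fun x (hx : (1:ℝ) < x) => (lt_trans zero_lt_one hx : (0:ℝ) < x))).aestronglyMeasurable
      measurableSet_Ioi)
    filter_upwards [ae_restrict_mem measurableSet_Ioi] with x hx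
    have hx1 : (1:ℝ) ≤ x := le_of_lt hx
    have hx0 : 0 < x := lt_of_lt_of_le zero_lt_one hx1
    have hS : 0 < Real.sinh x := Real.sinh_pos_iff.mpr hx0
    have hcp : 0 < c := c_pos
    rw [Real.norm_eq_abs, abs_of_nonneg (by positivity)]
    have h1 : Real.sinh x ^ (-b) ≤ (c * Real.exp x) ^ (-b) :=
      Real.rpow_le_rpow_of_nonpos (by positivity) (sinh_ge_exp hx1) (by linarith)
    have h2 : (c * Real.exp x) ^ (-b) = c ^ (-b) * Real.exp (-b * x) := by
      rw [Real.mul_rpow hcp.le (Real.exp_pos x).le, ← Real.exp_log (Real.exp_pos x),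
        ← Real.exp_mul, Real.log_exp]
      ring_nf
    calc x ^ a * Real.sinh x ^ (-b) ≤ x ^ a * (c ^ (-b) * Real.exp (-b * x)) := by
          apply mul_le_mul_of_nonneg_left _ (by positivity)
          rw [← h2]; exact h1
      _ = c ^ (-b) * (x ^ a * Real.exp (-b * x)) := by ring
  rw [show Ioi (0:ℝ) = Ioc 0 1 ∪ Ioi 1 from (Ioc_union_Ioi_eq_Ioi zero_le_one).symm]
  exact h01.union h1i




/-- `x^a * sinh x ^ (-b) → 0` as `x → 0⁺` when `0 ≤ b < a`. -/
lemma tendsto_zero_at_zero {a b : ℝ} (hb : 0 ≤ b) (hab : b < a) :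
    Tendsto (fun x => x ^ a * Real.sinh x ^ (-b)) (𝓝[>] (0:ℝ)) (𝓝 0) := by
  have hbound : Tendsto (fun x : ℝ => x ^ (a - b)) (𝓝[>] (0:ℝ)) (𝓝 0) := by
    have := (Real.continuousAt_rpow_const 0 (a - b) (Or.inr (by linarith))).tendsto
    rw [Real.zero_rpow (by linarith : a - b ≠ 0)] at this
    exact this.mono_left nhdsWithin_le_nhds
  apply squeeze_zero' ?_ ?_ hbound
  · filter_upwards [self_mem_nhdsWithin] with x (hx : 0 < x)
    have hS : 0 < Real.sinh x := Real.sinh_pos_iff.mpr hx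
    positivity
  · filter_upwards [self_mem_nhdsWithin] with x (hx : 0 < x)
    have hS : 0 < Real.sinh x := Real.sinh_pos_iff.mpr hx
    calc x ^ a * Real.sinh x ^ (-b) ≤ x ^ a * x ^ (-b) := by
          apply mul_le_mul_of_nonneg_left _ (by positivity)
          exact Real.rpow_le_rpow_of_nonpos hx (Real.self_le_sinh_iff.mpr hx.le) (by linarith)
      _ = x ^ (a - b) := by rw [← Real.rpow_add hx]; ring_nf

/-- `x^a * sinh x ^ (-b) → 0` as `x → ∞` when `0 < b`. -/
lemma tendsto_zero_atTop {b : ℝ} (a : ℝ) (hb : 0 < b) :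
    Tendsto (fun x => x ^ a * Real.sinh x ^ (-b)) atTop (𝓝 0) := by
  set c : ℝ := (1 - Real.exp (-2)) / 2 with hc
  have hcp : 0 < c := c_pos
  have hbound : Tendsto (fun x : ℝ => c ^ (-b) * (x ^ a * Real.exp (-b * x))) atTop (𝓝 0) := by
    have := (tendsto_rpow_mul_exp_neg_mul_atTop_nhds_zero a b hb).const_mul (c ^ (-b))
    simpa using this
  apply squeeze_zero' ?_ ?_ hbound
  · filter_upwards [eventually_ge_atTop (1:ℝ)] with x hx1
    have hx0 : 0 < x := lt_of_lt_of_le zero_lt_one hx1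
    have hS : 0 < Real.sinh x := Real.sinh_pos_iff.mpr hx0
    positivity
  · filter_upwards [eventually_ge_atTop (1:ℝ)] with x hx1
    have hx0 : 0 < x := lt_of_lt_of_le zero_lt_one hx1
    have hS : 0 < Real.sinh x := Real.sinh_pos_iff.mpr hx0
    have h2 : (c * Real.exp x) ^ (-b) = c ^ (-b) * Real.exp (-b * x) := by
      rw [Real.mul_rpow hcp.le (Real.exp_pos x).le, ← Real.exp_log (Real.exp_pos x),
        ← Real.exp_mul, Real.log_exp]
      ring_nf
    calc x ^ a * Real.sinh x ^ (-b) ≤ x ^ a * (c ^ (-b) * Real.exp (-b * x)) := by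
          apply mul_le_mul_of_nonneg_left _ (by positivity)
          rw [← h2]
          exact Real.rpow_le_rpow_of_nonpos (by positivity) (sinh_ge_exp hx1) (by linarith)
      _ = c ^ (-b) * (x ^ a * Real.exp (-b * x)) := by ring

/-- key pointwise bound: `cosh x * sinh x ^ (-b) ≤ sinh x ^ (-(b-1)) + sinh x ^ (-b)` -/
lemma cosh_mul_bound {b x : ℝ} (hx : 0 < x) :
    Real.cosh x * Real.sinh x ^ (-b) ≤ Real.sinh x ^ (-(b-1)) + Real.sinh x ^ (-b) := by
  have hS : 0 < Real.sinh x := Real.sinh_pos_iff.mpr hx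
  have hch : Real.cosh x ≤ Real.sinh x + 1 := by
    have := Real.cosh_eq x; have := Real.sinh_eq x
    have hex : Real.exp (-x) ≤ 1 := Real.exp_le_one_iff.mpr (by linarith)
    nlinarith [Real.exp_pos (-x)]
  have h1 : Real.sinh x * Real.sinh x ^ (-b) = Real.sinh x ^ (-(b-1)) := by
    nth_rewrite 1 [← Real.rpow_one (Real.sinh x)]
    rw [← Real.rpow_add hS]; ring_nf
  calc Real.cosh x * Real.sinh x ^ (-b) ≤ (Real.sinh x + 1) * Real.sinh x ^ (-b) := by
        apply mul_le_mul_of_nonneg_right hch (by positivity)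
    _ = Real.sinh x ^ (-(b-1)) + Real.sinh x ^ (-b) := by rw [← h1]; ring

lemma tendsto_cosh_zero_at_zero {a b : ℝ} (hb : 1 ≤ b) (hab : b < a) :
    Tendsto (fun x => x ^ a * (Real.cosh x * Real.sinh x ^ (-b))) (𝓝[>] (0:ℝ)) (𝓝 0) := by
  have h1 := tendsto_zero_at_zero (by linarith : (0:ℝ) ≤ b - 1) (by linarith : b - 1 < a)
  have h2 := tendsto_zero_at_zero (by linarith : (0:ℝ) ≤ b) hab
  have hsum := h1.add h2
  rw [add_zero] at hsum
  apply squeeze_zero' ?_ ?_ hsum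
  · filter_upwards [self_mem_nhdsWithin] with x (hx : 0 < x)
    have hS : 0 < Real.sinh x := Real.sinh_pos_iff.mpr hx
    have := Real.cosh_pos (x := x)
    positivity
  · filter_upwards [self_mem_nhdsWithin] with x (hx : 0 < x)
    calc x ^ a * (Real.cosh x * Real.sinh x ^ (-b))
        ≤ x ^ a * (Real.sinh x ^ (-(b-1)) + Real.sinh x ^ (-b)) :=
          mul_le_mul_of_nonneg_left (cosh_mul_bound hx) (by positivity)
      _ = x ^ a * Real.sinh x ^ (-(b-1)) + x ^ a * Real.sinh x ^ (-b) := by ring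

lemma tendsto_cosh_zero_atTop {b : ℝ} (a : ℝ) (hb : 1 < b) :
    Tendsto (fun x => x ^ a * (Real.cosh x * Real.sinh x ^ (-b))) atTop (𝓝 0) := by
  have h1 := tendsto_zero_atTop a (by linarith : (0:ℝ) < b - 1)
  have h2 := tendsto_zero_atTop a (by linarith : (0:ℝ) < b)
  have hsum := h1.add h2
  rw [add_zero] at hsum
  apply squeeze_zero' ?_ ?_ hsum
  · filter_upwards [eventually_gt_atTop (0:ℝ)] with x hx
    have hS : 0 < Real.sinh x := Real.sinh_pos_iff.mpr hx
    have := Real.cosh_pos (x := x)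
    positivity
  · filter_upwards [eventually_gt_atTop (0:ℝ)] with x hx
    calc x ^ a * (Real.cosh x * Real.sinh x ^ (-b))
        ≤ x ^ a * (Real.sinh x ^ (-(b-1)) + Real.sinh x ^ (-b)) :=
          mul_le_mul_of_nonneg_left (cosh_mul_bound hx) (by positivity)
      _ = x ^ a * Real.sinh x ^ (-(b-1)) + x ^ a * Real.sinh x ^ (-b) := by ring

/-- integrability with a cosh factor -/
lemma integrable_cosh_aux {a b : ℝ} (hb : 1 < b) (hab : b < a + 1) :
    IntegrableOn (fun x => x ^ a * (Real.cosh x * Real.sinh x ^ (-b))) (Ioi (0:ℝ)) := by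
  have h1 := integrable_aux (a := a) (by linarith : (0:ℝ) < b - 1) (by linarith)
  have h2 := integrable_aux (a := a) (by linarith : (0:ℝ) < b) hab
  have hdom := h1.add h2
  apply hdom.mono' ?_ ?_
  · apply ContinuousOn.aestronglyMeasurable ?_ measurableSet_Ioi
    apply ContinuousOn.mul
    · exact (continuous_id.continuousOn).rpow_const fun x hx => Or.inl (ne_of_gt hx)
    · exact Real.continuous_cosh.continuousOn.mul
        ((Real.continuous_sinh.continuousOn).rpow_const
          fun x hx => Or.inl (Real.sinh_pos_iff.mpr hx).ne')
  · filter_upwards [ae_restrict_mem measurableSet_Ioi] with x (hx : 0 < x)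
    have hS : 0 < Real.sinh x := Real.sinh_pos_iff.mpr hx
    have hch := Real.cosh_pos (x := x)
    rw [Real.norm_eq_abs, abs_of_nonneg (by positivity)]
    calc x ^ a * (Real.cosh x * Real.sinh x ^ (-b))
        ≤ x ^ a * (Real.sinh x ^ (-(b-1)) + Real.sinh x ^ (-b)) :=
          mul_le_mul_of_nonneg_left (cosh_mul_bound hx) (by positivity)
      _ = x ^ a * Real.sinh x ^ (-(b-1)) + x ^ a * Real.sinh x ^ (-b) := by ring

/-- first derivative -/
lemma hasDeriv1 (z : ℝ) {x : ℝ} (hx : 0 < x) :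
    HasDerivAt (fun y => Real.sinh y ^ (-z))
      (-z * (Real.cosh x * Real.sinh x ^ (-(z+1)))) x := by
  have hS : Real.sinh x ≠ 0 := (Real.sinh_pos_iff.mpr hx).ne'
  have := (Real.hasDerivAt_sinh x).rpow_const (p := -z) (Or.inl hS)
  convert this using 1
  rw [show -z - 1 = -(z+1) by ring]
  ring

/-- second derivative -/
lemma hasDeriv2 (z : ℝ) {x : ℝ} (hx : 0 < x) :
    HasDerivAt (fun y => -z * (Real.cosh y * Real.sinh y ^ (-(z+1))))
      (z^2 * Real.sinh x ^ (-z) + z*(z+1) * Real.sinh x ^ (-(z+2))) x := by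
  have hS : 0 < Real.sinh x := Real.sinh_pos_iff.mpr hx
  have hd : HasDerivAt (fun y => Real.cosh y * Real.sinh y ^ (-(z+1)))
      (Real.sinh x * Real.sinh x ^ (-(z+1)) +
        Real.cosh x * (Real.cosh x * (-(z+1)) * Real.sinh x ^ (-(z+1)-1))) x :=
    (Real.hasDerivAt_cosh x).mul
      ((Real.hasDerivAt_sinh x).rpow_const (p := -(z+1)) (Or.inl hS.ne'))
  have := hd.const_mul (-z)
  refine this.congr_deriv ?_; symm
  have h1 : Real.sinh x * Real.sinh x ^ (-(z+1)) = Real.sinh x ^ (-z) := by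
    nth_rewrite 1 [← Real.rpow_one (Real.sinh x)]
    rw [← Real.rpow_add hS]; ring_nf
  have h2 : Real.sinh x ^ (-(z+1)-1) * Real.sinh x ^ (2:ℝ) = Real.sinh x ^ (-z) := by
    rw [← Real.rpow_add hS]; ring_nf
  have h3 : Real.sinh x ^ (2:ℝ) = Real.sinh x ^ (2:ℕ) := by
    rw [← Real.rpow_natCast]; norm_num
  have hc : Real.cosh x ^ (2:ℕ) = Real.sinh x ^ (2:ℝ) + 1 := by
    rw [h3]; exact Real.cosh_sq x
  have h4 : Real.sinh x ^ (-(z+1)-1) = Real.sinh x ^ (-(z+2)) := by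
    rw [show -(z+1)-1 = -(z+2) by ring]
  linear_combination z*h1 - z*(z+1)*(Real.sinh x ^ (-(z+1)-1))*hc - z*(z+1)*h2 - z*(z+1)*h4

end GZAux

/-- The generalized Riemann zeta function. -/
noncomputable def genZeta (z s : ℝ) : ℝ :=
  (1 / Real.Gamma s) * ∫ x in Set.Ioi (0 : ℝ), x ^ (s - 1) / Real.sinh x ^ z

namespace GZAux

lemma genZeta_eq (z s : ℝ) :
    genZeta z s = (1 / Real.Gamma s) * ∫ x in Ioi (0:ℝ), x ^ (s-1) * Real.sinh x ^ (-z) := by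
  unfold genZeta
  congr 1
  apply setIntegral_congr_fun measurableSet_Ioi
  intro x hx
  have hS : 0 < Real.sinh x := Real.sinh_pos_iff.mpr hx
  show x ^ (s-1) / Real.sinh x ^ z = x ^ (s-1) * Real.sinh x ^ (-z)
  rw [Real.rpow_neg hS.le, div_eq_mul_inv]

end GZAux

/-- Recurrence relation `ζ(z,s) = z² ζ(z,s+2) + z(z+1) ζ(z+2,s+2)` for `s > z + 2 > 2`. -/
theorem genZeta_recurrence (z s : ℝ) (hz : 0 < z) (hs : z + 2 < s) :
    genZeta z s = z ^ 2 * genZeta z (s + 2) + z * (z + 1) * genZeta (z + 2) (s + 2) := by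
  have hs0 : (0:ℝ) < s := by linarith
  set g : ℝ → ℝ := fun x => Real.sinh x ^ (-z) with hg
  set G' : ℝ → ℝ := fun x => -z * (Real.cosh x * Real.sinh x ^ (-(z+1))) with hG'
  set G'' : ℝ → ℝ := fun x =>
    z^2 * Real.sinh x ^ (-z) + z*(z+1) * Real.sinh x ^ (-(z+2)) with hG''
  set J1 : ℝ := ∫ x in Ioi (0:ℝ), x ^ (s-1) * Real.sinh x ^ (-z) with hJ1
  set J2 : ℝ := ∫ x in Ioi (0:ℝ), x ^ (s+1) * Real.sinh x ^ (-z) with hJ2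
  set J3 : ℝ := ∫ x in Ioi (0:ℝ), x ^ (s+1) * Real.sinh x ^ (-(z+2)) with hJ3
  -- integrability facts
  have int2 : IntegrableOn (fun x => x ^ (s+1) * Real.sinh x ^ (-z)) (Ioi (0:ℝ)) :=
    GZAux.integrable_aux hz (by linarith)
  have int3 : IntegrableOn (fun x => x ^ (s+1) * Real.sinh x ^ (-(z+2))) (Ioi (0:ℝ)) :=
    GZAux.integrable_aux (by linarith) (by linarith)
  have int1 : IntegrableOn (fun x => x ^ (s-1) * Real.sinh x ^ (-z)) (Ioi (0:ℝ)) :=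
    GZAux.integrable_aux hz (by linarith)
  have intc1 : IntegrableOn (fun x => x ^ (s+1-1) * (Real.cosh x * Real.sinh x ^ (-(z+1))))
      (Ioi (0:ℝ)) := GZAux.integrable_cosh_aux (by linarith) (by rw [show s+1-1 = s by ring]; linarith)
  have intcs : IntegrableOn (fun x => x ^ s * (Real.cosh x * Real.sinh x ^ (-(z+1))))
      (Ioi (0:ℝ)) := by
    have := intc1; rwa [show s+1-1 = s by ring] at this
  -- first integration by parts: ∫ x^{s+1} G'' = - ∫ (s+1) x^s G'
  have ibp1 : (∫ x in Ioi (0:ℝ), x ^ (s+1) * G'' x)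
      = (0:ℝ) - 0 - ∫ x in Ioi (0:ℝ), ((s+1) * x ^ s) * G' x := by
    apply integral_Ioi_mul_deriv_eq_deriv_mul
      (u := fun x => x ^ (s+1)) (u' := fun x => (s+1) * x ^ s) (v := G') (v' := G'')
    · intro x hx
      have := Real.hasDerivAt_rpow_const (x := x) (p := s+1) (Or.inl (ne_of_gt hx))
      rwa [show s+1-1 = s by ring] at this
    · intro x hx
      exact GZAux.hasDeriv2 z hx
    · -- IntegrableOn ((fun x => x^(s+1)) * G'')
      have heq : ((fun x => x ^ (s+1)) * G'') = fun x =>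
          z^2 * (x ^ (s+1) * Real.sinh x ^ (-z)) + z*(z+1) * (x ^ (s+1) * Real.sinh x ^ (-(z+2))) := by
        funext x; simp only [Pi.mul_apply, hG'']; ring
      rw [heq]
      exact ((int2.const_mul _).add (int3.const_mul _))
    · -- IntegrableOn ((fun x => (s+1) * x^s) * G')
      have heq : ((fun x => (s+1) * x ^ s) * G') = fun x =>
          ((s+1) * (-z)) * (x ^ s * (Real.cosh x * Real.sinh x ^ (-(z+1)))) := by
        funext x; simp only [Pi.mul_apply, hG']; ring
      rw [heq]
      exact intcs.const_mul _
    · have heq : ((fun x => x ^ (s+1)) * G') = fun x =>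
          (-z) * (x ^ (s+1) * (Real.cosh x * Real.sinh x ^ (-(z+1)))) := by
        funext x; simp only [Pi.mul_apply, hG']; ring
      rw [heq]
      have := (GZAux.tendsto_cosh_zero_at_zero (a := s+1) (b := z+1)
        (by linarith) (by linarith)).const_mul (-z)
      simpa using this
    · have heq : ((fun x => x ^ (s+1)) * G') = fun x =>
          (-z) * (x ^ (s+1) * (Real.cosh x * Real.sinh x ^ (-(z+1)))) := by
        funext x; simp only [Pi.mul_apply, hG']; ring
      rw [heq]
      have := (GZAux.tendsto_cosh_zero_atTop (s+1) (by linarith : (1:ℝ) < z+1)).const_mul (-z)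
      simpa using this
  -- second integration by parts: ∫ x^s G' = - ∫ s x^{s-1} g
  have ibp2 : (∫ x in Ioi (0:ℝ), x ^ s * G' x)
      = (0:ℝ) - 0 - ∫ x in Ioi (0:ℝ), (s * x ^ (s-1)) * g x := by
    apply integral_Ioi_mul_deriv_eq_deriv_mul
      (u := fun x => x ^ s) (u' := fun x => s * x ^ (s-1)) (v := g) (v' := G')
    · intro x hx
      exact Real.hasDerivAt_rpow_const (x := x) (p := s) (Or.inl (ne_of_gt hx))
    · intro x hx
      exact GZAux.hasDeriv1 z hx
    · have heq : ((fun x => x ^ s) * G') = fun x =>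
          (-z) * (x ^ s * (Real.cosh x * Real.sinh x ^ (-(z+1)))) := by
        funext x; simp only [Pi.mul_apply, hG']; ring
      rw [heq]
      exact intcs.const_mul _
    · have heq : ((fun x => s * x ^ (s-1)) * g) = fun x =>
          s * (x ^ (s-1) * Real.sinh x ^ (-z)) := by
        funext x; simp only [Pi.mul_apply, hg]; ring
      rw [heq]
      exact int1.const_mul _
    · have heq : ((fun x => x ^ s) * g) = fun x => x ^ s * Real.sinh x ^ (-z) := by
        funext x; simp only [Pi.mul_apply, hg]
      rw [heq]
      exact GZAux.tendsto_zero_at_zero hz.le (by linarith)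
    · have heq : ((fun x => x ^ s) * g) = fun x => x ^ s * Real.sinh x ^ (-z) := by
        funext x; simp only [Pi.mul_apply, hg]
      rw [heq]
      exact GZAux.tendsto_zero_atTop s hz
  -- evaluate both sides of ibp1
  have lhs1 : (∫ x in Ioi (0:ℝ), x ^ (s+1) * G'' x) = z^2 * J2 + z*(z+1) * J3 := by
    have heq : (fun x => x ^ (s+1) * G'' x) = fun x =>
        z^2 * (x ^ (s+1) * Real.sinh x ^ (-z)) + z*(z+1) * (x ^ (s+1) * Real.sinh x ^ (-(z+2))) := by
      funext x; simp only [hG'']; ring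
    rw [heq, integral_add (int2.const_mul _) (int3.const_mul _),
      integral_const_mul, integral_const_mul]
  have rhs1 : (∫ x in Ioi (0:ℝ), ((s+1) * x ^ s) * G' x)
      = (s+1) * ∫ x in Ioi (0:ℝ), x ^ s * G' x := by
    rw [← integral_const_mul]
    congr 1; funext x; ring
  have rhs2 : (∫ x in Ioi (0:ℝ), (s * x ^ (s-1)) * g x) = s * J1 := by
    rw [← integral_const_mul]
    congr 1; funext x; simp only [hg]; ring
  have key : z^2 * J2 + z*(z+1) * J3 = s * (s+1) * J1 := by
    rw [← lhs1, ibp1, rhs1, ibp2, rhs2]; ring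
  -- Gamma recurrence
  have hG0 : 0 < Real.Gamma s := Real.Gamma_pos_of_pos hs0
  have hGamma : Real.Gamma (s+2) = (s+1) * (s * Real.Gamma s) := by
    rw [show s+2 = (s+1)+1 by ring, Real.Gamma_add_one (by positivity),
      Real.Gamma_add_one (ne_of_gt hs0)]
  -- assemble
  rw [GZAux.genZeta_eq, GZAux.genZeta_eq, GZAux.genZeta_eq, hGamma]
  rw [show s+2-1 = s+1 by ring]
  rw [← hJ1, ← hJ2, ← hJ3]
  have hGn : Real.Gamma s ≠ 0 := ne_of_gt hG0
  field_simp
  linear_combination (-1 : ℝ) * key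
end

section
/- For each natural number n ≥ 1, the Dirichlet beta value at an even integer satisfies β(2n) = (1/2) Σ_{k=n}^∞ C(2k, 2n−1) · (2^{2k+1} − 1)/16^k · ζ(2k+1), where β is the Dirichlet beta function, ζ is the Riemann zeta function, and C(·,·) is a binomial coefficient. -/
open Function

private lemma summable_base (s : ℕ) (hs : 2 ≤ s) :
    Summable fun m : ℕ => (1:ℝ) / ((m:ℝ) + 1) ^ s := by
  have h : Summable fun m : ℕ => (1:ℝ) / (m:ℝ) ^ s :=
    Real.summable_one_div_nat_pow.mpr (by omega)
  have := (summable_nat_add_iff 1).mpr h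
  simpa using this

private lemma summable_odd (s : ℕ) (hs : 2 ≤ s) :
    Summable fun m : ℕ => (1:ℝ) / (2*(m:ℝ) + 1) ^ s := by
  refine (summable_base s hs).of_nonneg_of_le (fun m => by positivity) (fun m => ?_)
  have h0 : (0:ℝ) ≤ (m:ℝ) := Nat.cast_nonneg m
  gcongr
  linarith

private lemma zeta_to_odd (k : ℕ) (hk : 1 ≤ k) :
    ((2:ℝ) ^ (2*k+1) - 1) / 16^k * ∑' m : ℕ, (1:ℝ)/((m:ℝ)+1)^(2*k+1)
      = 2 / 4^k * ∑' m : ℕ, (1:ℝ)/(2*(m:ℝ)+1)^(2*k+1) := by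
  set s := 2*k+1 with hs
  have hs2 : 2 ≤ s := by omega
  set f : ℕ → ℝ := fun m => (1:ℝ)/((m:ℝ)+1)^s with hf
  have hZ : Summable f := summable_base s hs2
  have heeq : (fun m : ℕ => f (2*m)) = fun m : ℕ => (1:ℝ)/(2*(m:ℝ)+1)^s := by
    funext m; simp only [hf]; push_cast; ring_nf
  have hoeq : (fun m : ℕ => f (2*m+1)) = fun m : ℕ => (1/2^s) * ((1:ℝ)/((m:ℝ)+1)^s) := by
    funext m; simp only [hf]; push_cast
    rw [show ((2:ℝ)*(m:ℝ)+1+1) = 2*((m:ℝ)+1) by ring, mul_pow]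
    rw [one_div ((2:ℝ)^s), div_mul_eq_div_div, one_div, one_div, ← mul_inv, mul_inv, div_eq_mul_inv]
  have hO : Summable fun m : ℕ => (1:ℝ)/(2*(m:ℝ)+1)^s := summable_odd s hs2
  have he : Summable fun m : ℕ => f (2*m) := by rw [heeq]; exact hO
  have ho : Summable fun m : ℕ => f (2*m+1) := by rw [hoeq]; exact hZ.mul_left _
  have key := tsum_even_add_odd he ho
  rw [heeq, hoeq, tsum_mul_left] at key
  -- key : O + (1/2^s) * Z = Z
  set Z := ∑' m : ℕ, (1:ℝ)/((m:ℝ)+1)^s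
  set O := ∑' m : ℕ, (1:ℝ)/(2*(m:ℝ)+1)^s
  have h2s : (2:ℝ)^s = 2 * 4^k := by
    rw [hs, pow_succ, pow_mul]; norm_num; ring
  have h16 : (16:ℝ)^k = 4^k * 4^k := by
    rw [show (16:ℝ) = 4*4 by norm_num, mul_pow]
  have h4 : (0:ℝ) < 4^k := by positivity
  rw [h2s] at key
  rw [h2s, h16]
  have h4' : (4:ℝ)^k ≠ 0 := ne_of_gt h4
  field_simp at key ⊢
  linear_combination (-1:ℝ) * key

private lemma gf_odd (r : ℕ) {x : ℝ} (h0 : 0 < x) (h1 : x < 1) :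
    HasSum (fun j : ℕ => (((2*j+1) + r).choose r : ℝ) * x ^ (2*j+1))
      ((1/(1-x)^(r+1) - 1/(1+x)^(r+1)) / 2) := by
  have hx : ‖x‖ < 1 := by rw [Real.norm_eq_abs, abs_of_pos h0]; exact h1
  have hx' : ‖-x‖ < 1 := by rwa [norm_neg]
  have S1 := hasSum_choose_mul_geometric_of_norm_lt_one (𝕜 := ℝ) r hx
  have S2 := hasSum_choose_mul_geometric_of_norm_lt_one (𝕜 := ℝ) r hx'
  rw [sub_neg_eq_add] at S2
  have hsub := S1.sub S2
  set g : ℕ → ℝ := fun i => ((i + r).choose r : ℝ) * (x ^ i - (-x) ^ i) with hg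
  have hsub' : HasSum g (1/(1-x)^(r+1) - 1/(1+x)^(r+1)) := by
    refine HasSum.congr_fun hsub ?_
    intro i; simp [hg, mul_sub]
  have hinj : Function.Injective (fun j : ℕ => 2*j+1) := fun a b h => by
    simp only [] at h; omega
  have hzero : ∀ i ∉ Set.range (fun j : ℕ => 2*j+1), g i = 0 := by
    intro i hi
    have hev : Even i := by
      rcases Nat.even_or_odd i with h | h
      · exact h
      · obtain ⟨j, hj⟩ := h
        exact absurd ⟨j, show 2*j+1 = i by omega⟩ hi
    obtain ⟨t, ht⟩ := hev
    simp only [hg, ht]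
    rw [Even.neg_pow ⟨t, rfl⟩]
    ring
  have hodd : HasSum (fun j => g (2*j+1)) (1/(1-x)^(r+1) - 1/(1+x)^(r+1)) :=
    (hinj.hasSum_iff hzero).mpr hsub'
  have heq : (fun j : ℕ => g (2*j+1)) = fun j => 2 * ((((2*j+1)+r).choose r : ℝ) * x^(2*j+1)) := by
    funext j
    simp only [hg]
    rw [Odd.neg_pow ⟨j, by ring⟩]
    ring
  rw [heq] at hodd
  have h2 := hodd.mul_left (2⁻¹ : ℝ)
  have hfun : (fun j : ℕ => (2⁻¹:ℝ) * (2 * ((((2*j+1)+r).choose r : ℝ) * x^(2*j+1))))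
      = fun j : ℕ => (((2*j+1)+r).choose r : ℝ) * x^(2*j+1) := by
    funext j; ring
  rw [hfun] at h2
  rwa [div_eq_inv_mul]

private lemma column_hasSum (n : ℕ) (hn : 1 ≤ n) (m : ℕ) :
    HasSum (fun j : ℕ => (Nat.choose (2*(n+j)) (2*n-1) : ℝ) * (1/4^(n+j)) *
        (1/(2*(m:ℝ)+1)^(2*(n+j)+1)))
      (1/(4*(m:ℝ)+1)^(2*n) - 1/(4*(m:ℝ)+3)^(2*n)) := by
  have hm0 : (0:ℝ) ≤ (m:ℝ) := Nat.cast_nonneg m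
  set Q : ℝ := 2*(m:ℝ)+1 with hQ
  have hQ1 : 1 ≤ Q := by rw [hQ]; linarith
  have hQ0 : 0 < Q := by linarith
  set x : ℝ := 1/(2*Q) with hx
  have hx0 : 0 < x := by positivity
  have hx1 : x < 1 := by rw [hx, div_lt_one (by positivity)]; linarith
  have G := (gf_odd (2*n-1) hx0 hx1).mul_left (x^(2*n-1) / Q)
  have hr1 : 2*n - 1 + 1 = 2*n := by omega
  rw [hr1] at G
  have h2Q : (0:ℝ) < 2*Q - 1 := by linarith
  have h1mx : 1 - x = (2*Q-1)/(2*Q) := by rw [hx]; field_simp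
  have h1px : 1 + x = (2*Q+1)/(2*Q) := by rw [hx]; field_simp
  have hfun : (fun j : ℕ => (x^(2*n-1) / Q) * ((((2*j+1)+(2*n-1)).choose (2*n-1) : ℝ) * x^(2*j+1)))
      = fun j : ℕ => (Nat.choose (2*(n+j)) (2*n-1) : ℝ) * (1/4^(n+j)) *
        (1/(2*(m:ℝ)+1)^(2*(n+j)+1)) := by
    funext j
    have hidx : (2*j+1)+(2*n-1) = 2*(n+j) := by omega
    rw [hidx, ← hQ]
    have hxp : x^(2*n-1) * x^(2*j+1) = x^(2*(n+j)) := by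
      rw [← pow_add]; congr 1; omega
    have hxval : x^(2*(n+j)) = 1/(4^(n+j) * Q^(2*(n+j))) := by
      rw [hx, div_pow, one_pow, mul_pow]
      congr 2
      rw [pow_mul]; norm_num
    calc (x^(2*n-1) / Q) * (((2*(n+j)).choose (2*n-1) : ℝ) * x^(2*j+1))
        = ((2*(n+j)).choose (2*n-1) : ℝ) * (x^(2*n-1) * x^(2*j+1)) / Q := by ring
      _ = ((2*(n+j)).choose (2*n-1) : ℝ) * (1/(4^(n+j) * Q^(2*(n+j)))) / Q := by
          rw [hxp, hxval]
      _ = ((2*(n+j)).choose (2*n-1) : ℝ) * (1/4^(n+j)) * (1/Q^(2*(n+j)+1)) := by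
          rw [pow_succ]
          have h4 : (0:ℝ) < (4:ℝ)^(n+j) := by positivity
          field_simp
  have hval : (x^(2*n-1) / Q) * ((1/(1-x)^(2*n) - 1/(1+x)^(2*n))/2)
      = 1/(4*(m:ℝ)+1)^(2*n) - 1/(4*(m:ℝ)+3)^(2*n) := by
    have hm1 : 4*(m:ℝ)+1 = 2*Q-1 := by rw [hQ]; ring
    have hm3 : 4*(m:ℝ)+3 = 2*Q+1 := by rw [hQ]; ring
    rw [hm1, hm3, h1mx, h1px, hx]
    have e : 2*n = (2*n-1)+1 := by omega
    generalize 2*n-1 = r at e ⊢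
    rw [e]
    have h2Q0 : (0:ℝ) < 2*Q := by linarith
    have h2Qp : (0:ℝ) < 2*Q + 1 := by linarith
    rw [div_pow, div_pow, div_pow, one_pow]
    rw [one_div_div, one_div_div]
    field_simp
    ring
  rw [hfun, hval] at G
  exact G

private lemma beta_pair (n : ℕ) (hn : 1 ≤ n) :
    (∑' m : ℕ, (-1:ℝ)^m / (2*(m:ℝ)+1)^(2*n))
      = ∑' m : ℕ, (1/(4*(m:ℝ)+1)^(2*n) - 1/(4*(m:ℝ)+3)^(2*n)) := by
  set f : ℕ → ℝ := fun m => (-1:ℝ)^m / (2*(m:ℝ)+1)^(2*n) with hf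
  have habs : Summable f := by
    refine Summable.of_abs ?_
    refine (summable_odd (2*n) (by omega)).congr fun m => ?_
    simp [hf, abs_div, abs_pow, abs_of_nonneg (show (0:ℝ) ≤ 2*(m:ℝ)+1 by positivity)]
  have he : Summable fun k : ℕ => f (2*k) :=
    habs.comp_injective (fun a b h => by omega)
  have ho : Summable fun k : ℕ => f (2*k+1) :=
    habs.comp_injective (fun a b h => by omega)
  have key := tsum_even_add_odd he ho
  rw [← key, ← Summable.tsum_add he ho]
  apply tsum_congr
  intro m
  simp only [hf]
  have h1 : (-1:ℝ)^(2*m) = 1 := by rw [pow_mul]; norm_num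
  have h2 : (-1:ℝ)^(2*m+1) = -1 := by rw [pow_succ, pow_mul]; norm_num
  push_cast
  rw [h1, h2]
  rw [show (2*(2*(m:ℝ))+1) = 4*(m:ℝ)+1 by ring, show (2*(2*(m:ℝ)+1)+1) = 4*(m:ℝ)+3 by ring]
  ring

/-- `β(2n) = (1/2) Σ_{k=n}^∞ C(2k,2n−1) (2^{2k+1}−1)/16^k ζ(2k+1)` for `n ≥ 1`. -/
theorem beta_even_series (n : ℕ) (hn : 1 ≤ n) :
    (∑' m : ℕ, (-1) ^ m / (2 * (m : ℝ) + 1) ^ (2 * n)) =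
      (1 / 2) * ∑' j : ℕ,
        (Nat.choose (2 * (n + j)) (2 * n - 1) : ℝ) *
          ((2 ^ (2 * (n + j) + 1) - 1) / 16 ^ (n + j)) *
          ∑' m : ℕ, (1 : ℝ) / ((m : ℝ) + 1) ^ (2 * (n + j) + 1) := by
  set F : ℕ → ℕ → ℝ := fun m j => (Nat.choose (2*(n+j)) (2*n-1) : ℝ) * (1/4^(n+j)) *
      (1/(2*(m:ℝ)+1)^(2*(n+j)+1)) with hF
  have hcol : ∀ m : ℕ, HasSum (fun j => F m j)
      (1/(4*(m:ℝ)+1)^(2*n) - 1/(4*(m:ℝ)+3)^(2*n)) := column_hasSum n hn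
  have hU : Summable (Function.uncurry F) := by
    rw [summable_prod_of_nonneg (fun p => by
      show (0:ℝ) ≤ F p.1 p.2
      rw [hF]; positivity)]
    refine ⟨fun m => (hcol m).summable, ?_⟩
    have heq : (fun m : ℕ => ∑' j, F m j)
        = fun m : ℕ => 1/(4*(m:ℝ)+1)^(2*n) - 1/(4*(m:ℝ)+3)^(2*n) :=
      funext fun m => (hcol m).tsum_eq
    show Summable fun m : ℕ => ∑' j, F m j
    rw [heq]
    refine (summable_base 2 le_rfl).of_nonneg_of_le (fun m => ?_) (fun m => ?_)
    · have hm0 : (0:ℝ) ≤ (m:ℝ) := Nat.cast_nonneg m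
      have : (1:ℝ)/(4*(m:ℝ)+3)^(2*n) ≤ 1/(4*(m:ℝ)+1)^(2*n) := by
        apply one_div_le_one_div_of_le (by positivity)
        apply pow_le_pow_left₀ (by positivity) (by linarith)
      linarith
    · have hm0 : (0:ℝ) ≤ (m:ℝ) := Nat.cast_nonneg m
      have h1 : (1:ℝ)/(4*(m:ℝ)+1)^(2*n) ≤ 1/((m:ℝ)+1)^2 := by
        rw [div_le_div_iff₀ (by positivity) (by positivity)]
        calc (1:ℝ) * ((m:ℝ)+1)^2 = ((m:ℝ)+1)^2 := by ring
          _ ≤ (4*(m:ℝ)+1)^2 := by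
              apply pow_le_pow_left₀ (by positivity) (by linarith)
          _ ≤ (4*(m:ℝ)+1)^(2*n) := by
              apply pow_le_pow_right₀ (by linarith) (by omega)
          _ = 1 * (4*(m:ℝ)+1)^(2*n) := by ring
      have h2 : (0:ℝ) ≤ 1/(4*(m:ℝ)+3)^(2*n) := by positivity
      linarith
  have hterm : ∀ j : ℕ, (Nat.choose (2*(n+j)) (2*n-1) : ℝ) *
      ((2^(2*(n+j)+1) - 1)/16^(n+j)) * ∑' m : ℕ, (1:ℝ)/((m:ℝ)+1)^(2*(n+j)+1)
      = 2 * ∑' m : ℕ, F m j := by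
    intro j
    have hA := zeta_to_odd (n+j) (by omega)
    calc (Nat.choose (2*(n+j)) (2*n-1) : ℝ) * ((2^(2*(n+j)+1) - 1)/16^(n+j)) *
          ∑' m : ℕ, (1:ℝ)/((m:ℝ)+1)^(2*(n+j)+1)
        = (Nat.choose (2*(n+j)) (2*n-1) : ℝ) * (((2:ℝ)^(2*(n+j)+1) - 1)/16^(n+j) *
          ∑' m : ℕ, (1:ℝ)/((m:ℝ)+1)^(2*(n+j)+1)) := by ring
      _ = (Nat.choose (2*(n+j)) (2*n-1) : ℝ) * (2/4^(n+j) *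
          ∑' m : ℕ, (1:ℝ)/(2*(m:ℝ)+1)^(2*(n+j)+1)) := by rw [hA]
      _ = ∑' m : ℕ, (Nat.choose (2*(n+j)) (2*n-1) : ℝ) * (2/4^(n+j)) *
          ((1:ℝ)/(2*(m:ℝ)+1)^(2*(n+j)+1)) := by
            rw [← tsum_mul_left, ← tsum_mul_left]; apply tsum_congr; intro m; ring
      _ = ∑' m : ℕ, 2 * F m j := by
            apply tsum_congr; intro m; rw [hF]; ring
      _ = 2 * ∑' m : ℕ, F m j := tsum_mul_left
  rw [beta_pair n hn, tsum_congr hterm, tsum_mul_left, ← mul_assoc,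
    show ((1:ℝ)/2) * 2 = 1 by norm_num, one_mul]
  have hswap := Summable.tsum_comm (f := F) hU
  rw [hswap]
  exact tsum_congr fun m => ((hcol m).tsum_eq).symm
end

section
/- For real z > 0, the generalized Dirichlet beta function satisfies β(z,2) = 2 ∫₀¹∫₀¹ (2xy)^{z-1}/(1 + x²y²)^z dx dy, where β(z,2) = ∫₀^∞ x/cosh^z(x) dx. -/
open Real MeasureTheory Set
open scoped ENNReal

noncomputable def Hf (z u : ℝ) : ℝ := (2*u) ^ (z-1) / (1+u^2)^z

lemma Hf_nonneg {z u : ℝ} (hu : 0 ≤ u) : 0 ≤ Hf z u :=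
  div_nonneg (rpow_nonneg (by linarith) _) (rpow_nonneg (by positivity) _)

lemma Hf_le {z u : ℝ} (hz : 0 < z) (hu : 0 ≤ u) : Hf z u ≤ 2^(z-1) * u^(z-1) := by
  have h1 : Hf z u ≤ (2*u)^(z-1) := by
    apply div_le_self (rpow_nonneg (by linarith) _)
    exact Real.one_le_rpow (by nlinarith) hz.le
  rwa [Real.mul_rpow (by norm_num) hu] at h1

lemma Hf_meas (z : ℝ) : Measurable (Hf z) := by unfold Hf; fun_prop

lemma Hf_int (z : ℝ) (hz : 0 < z) : IntegrableOn (Hf z) (Ioo 0 1) := by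
  have hb : IntegrableOn (fun u : ℝ => 2^(z-1) * u^(z-1)) (Ioo 0 1) := by
    apply Integrable.const_mul
    have h : IntervalIntegrable (fun u : ℝ => u ^ (z-1)) volume 0 1 :=
      intervalIntegral.intervalIntegrable_rpow' (by linarith)
    rwa [intervalIntegrable_iff_integrableOn_Ioo_of_le (by norm_num)] at h
  apply hb.mono' ((Hf_meas z).aestronglyMeasurable.restrict)
  filter_upwards [ae_restrict_mem measurableSet_Ioo] with u hu
  rw [Real.norm_eq_abs, abs_of_nonneg (Hf_nonneg hu.1.le)]
  exact Hf_le hz hu.1.le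

lemma img_mul {x : ℝ} (hx : 0 < x) : (fun y => x*y) '' (Ioo 0 1) = Ioo 0 x := by
  rw [Set.image_mul_left_Ioo hx]; simp

lemma cov_B {z x : ℝ} (hx : x ∈ Ioo (0:ℝ) 1) :
    ∫ u in Ioo (0:ℝ) x, Hf z u = x * ∫ y in Ioo (0:ℝ) 1, Hf z (x*y) := by
  rw [← img_mul hx.1, integral_image_eq_integral_abs_deriv_smul measurableSet_Ioo
      (fun y _ => by simpa using ((hasDerivAt_id y).const_mul x).hasDerivWithinAt)
      ((mul_right_injective₀ hx.1.ne').injOn)]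
  simp only [smul_eq_mul, abs_of_pos hx.1, integral_const_mul]

lemma img_neg_log : (fun u : ℝ => -Real.log u) '' (Ioo 0 1) = Ioi (0:ℝ) := by
  ext t
  simp only [mem_image, mem_Ioo, mem_Ioi]
  constructor
  · rintro ⟨u, ⟨h0, h1⟩, rfl⟩
    simpa using Real.log_neg h0 h1
  · intro ht
    exact ⟨Real.exp (-t), ⟨Real.exp_pos _, Real.exp_lt_one_iff.2 (by linarith)⟩,
      by simp [Real.log_exp]⟩

lemma cosh_neg_log {u : ℝ} (h0 : 0 < u) :
    Real.cosh (-Real.log u) = (1 + u^2) / (2*u) := by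
  rw [Real.cosh_eq, Real.exp_neg, Real.exp_log h0, neg_neg, Real.exp_log h0]
  field_simp

lemma cov_A (z : ℝ) :
    ∫ x in Ioi (0:ℝ), x / Real.cosh x ^ z
      = ∫ u in Ioo (0:ℝ) 1, (-Real.log u) * (2 * Hf z u) := by
  have hinj : InjOn (fun u : ℝ => -Real.log u) (Ioo 0 1) := fun a ha b hb h => by
    exact Real.log_injOn_pos (mem_Ioi.2 ha.1) (mem_Ioi.2 hb.1) (neg_injective h)
  rw [← img_neg_log, integral_image_eq_integral_abs_deriv_smul (f := fun u : ℝ => -Real.log u) measurableSet_Ioo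
      (fun u hu => ((Real.hasDerivAt_log hu.1.ne').neg).hasDerivWithinAt) hinj]
  apply setIntegral_congr_fun measurableSet_Ioo
  intro u hu
  have h0 := hu.1
  have h2u : (0:ℝ) < 2*u := by linarith
  have hden : (0:ℝ) < 1 + u^2 := by positivity
  simp only [smul_eq_mul, abs_neg, abs_inv, abs_of_pos h0, cosh_neg_log h0,
    Real.div_rpow hden.le h2u.le]
  unfold Hf
  rw [Real.rpow_sub_one h2u.ne' z]
  field_simp

lemma neg_log_eq_lintegral {u : ℝ} (h0 : 0 < u) (h1 : u < 1) :
    ENNReal.ofReal (-Real.log u) = ∫⁻ x in Ioo u 1, ENNReal.ofReal x⁻¹ := by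
  have hint : IntegrableOn (fun x : ℝ => x⁻¹) (Ioo u 1) := by
    apply (ContinuousOn.integrableOn_compact isCompact_Icc ?_).mono_set Ioo_subset_Icc_self
    exact continuousOn_id.inv₀ fun x hx => by
      simp only [id]; exact (lt_of_lt_of_le h0 hx.1).ne'
  rw [← ofReal_integral_eq_lintegral_ofReal hint]
  · congr 1
    rw [← integral_Ioc_eq_integral_Ioo, ← intervalIntegral.integral_of_le h1.le,
      integral_inv_of_pos h0 one_pos, one_div, Real.log_inv]
  · filter_upwards [ae_restrict_mem measurableSet_Ioo] with x hx
    exact inv_nonneg.2 (by linarith [hx.1])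

lemma key (z : ℝ) (hHint : IntegrableOn (Hf z) (Ioo 0 1)) :
    ∫ u in Ioo (0:ℝ) 1, (-Real.log u) * Hf z u
      = ∫ x in Ioo (0:ℝ) 1, ∫ y in Ioo (0:ℝ) 1, Hf z (x*y) := by
  set F : ℝ × ℝ → ℝ≥0∞ := fun p =>
    if p.2 < p.1 then ENNReal.ofReal p.1⁻¹ * ENNReal.ofReal (Hf z p.2) else 0 with hF
  have hFmeas : Measurable F := by
    apply Measurable.ite (measurableSet_lt measurable_snd measurable_fst)
    · exact (measurable_fst.inv.ennreal_ofReal).mul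
        (((Hf_meas z).comp measurable_snd).ennreal_ofReal)
    · exact measurable_const
  have hL : ∫ u in Ioo (0:ℝ) 1, (-Real.log u) * Hf z u
      = (∫⁻ u in Ioo (0:ℝ) 1, ∫⁻ x in Ioo (0:ℝ) 1, F (x, u)).toReal := by
    rw [integral_eq_lintegral_of_nonneg_ae]
    · congr 1
      apply lintegral_congr_ae
      filter_upwards [ae_restrict_mem measurableSet_Ioo] with u hu
      have h0 := hu.1
      calc ENNReal.ofReal (-Real.log u * Hf z u)
          = ENNReal.ofReal (-Real.log u) * ENNReal.ofReal (Hf z u) :=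
            ENNReal.ofReal_mul (by simpa using Real.log_nonpos h0.le hu.2.le)
        _ = (∫⁻ x in Ioo u 1, ENNReal.ofReal x⁻¹) * ENNReal.ofReal (Hf z u) := by
            rw [neg_log_eq_lintegral h0 hu.2]
        _ = ∫⁻ x in Ioo u 1, ENNReal.ofReal x⁻¹ * ENNReal.ofReal (Hf z u) := by
            rw [lintegral_mul_const _ measurable_inv.ennreal_ofReal]
        _ = ∫⁻ x in Ioo (0:ℝ) 1, F (x, u) := by
            have hseteq : Ioi u ∩ Ioo (0:ℝ) 1 = Ioo u 1 := by
              ext t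
              simp only [mem_inter_iff, mem_Ioi, mem_Ioo]
              exact ⟨fun ⟨h1, _, h3⟩ => ⟨h1, h3⟩, fun ⟨h1, h2⟩ => ⟨h1, lt_trans h0 h1, h2⟩⟩
            have : ∀ x : ℝ, F (x, u)
                = (Ioi u).indicator (fun x => ENNReal.ofReal x⁻¹ * ENNReal.ofReal (Hf z u)) x := by
              intro x; rw [Set.indicator_apply]; simp only [hF, mem_Ioi]
            simp_rw [this]
            rw [lintegral_indicator measurableSet_Ioi, Measure.restrict_restrict measurableSet_Ioi,
              hseteq]
    · filter_upwards [ae_restrict_mem measurableSet_Ioo] with u hu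
      exact mul_nonneg (by simpa using Real.log_nonpos hu.1.le hu.2.le) (Hf_nonneg hu.1.le)
    · exact ((measurable_log.neg.mul (Hf_meas z)).aestronglyMeasurable).restrict
  have hswap : (∫⁻ u in Ioo (0:ℝ) 1, ∫⁻ x in Ioo (0:ℝ) 1, F (x, u))
      = ∫⁻ x in Ioo (0:ℝ) 1, ∫⁻ u in Ioo (0:ℝ) 1, F (x, u) :=
    lintegral_lintegral_swap ((hFmeas.comp measurable_swap).aemeasurable)
  have hR : (∫⁻ x in Ioo (0:ℝ) 1, ∫⁻ u in Ioo (0:ℝ) 1, F (x, u)).toReal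
      = ∫ x in Ioo (0:ℝ) 1, ∫ y in Ioo (0:ℝ) 1, Hf z (x*y) := by
    rw [integral_eq_lintegral_of_nonneg_ae]
    · congr 1
      apply lintegral_congr_ae
      filter_upwards [ae_restrict_mem measurableSet_Ioo] with x hx
      symm
      have h0 := hx.1
      have hseteq : Iio x ∩ Ioo (0:ℝ) 1 = Ioo 0 x := by
        ext t
        simp only [mem_inter_iff, mem_Iio, mem_Ioo]
        exact ⟨fun ⟨h1, h2, _⟩ => ⟨h2, h1⟩, fun ⟨h1, h2⟩ => ⟨h2, h1, lt_of_lt_of_le h2 hx.2.le⟩⟩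
      have hFind : ∀ u : ℝ, F (x, u)
          = (Iio x).indicator (fun u => ENNReal.ofReal x⁻¹ * ENNReal.ofReal (Hf z u)) u := by
        intro u; rw [Set.indicator_apply]; simp only [hF, mem_Iio]
      calc ENNReal.ofReal (∫ y in Ioo (0:ℝ) 1, Hf z (x*y))
          = ENNReal.ofReal (x⁻¹ * ∫ u in Ioo (0:ℝ) x, Hf z u) := by
            rw [cov_B hx, inv_mul_cancel_left₀ h0.ne']
        _ = ENNReal.ofReal x⁻¹ * ENNReal.ofReal (∫ u in Ioo (0:ℝ) x, Hf z u) :=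
            ENNReal.ofReal_mul (inv_nonneg.2 h0.le)
        _ = ENNReal.ofReal x⁻¹ * ∫⁻ u in Ioo (0:ℝ) x, ENNReal.ofReal (Hf z u) := by
            rw [ofReal_integral_eq_lintegral_ofReal
              (hHint.mono_set (Ioo_subset_Ioo le_rfl hx.2.le))]
            filter_upwards [ae_restrict_mem measurableSet_Ioo] with u hu
            exact Hf_nonneg hu.1.le
        _ = ∫⁻ u in Ioo (0:ℝ) x, ENNReal.ofReal x⁻¹ * ENNReal.ofReal (Hf z u) := by
            rw [lintegral_const_mul _ ((Hf_meas z).ennreal_ofReal)]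
        _ = ∫⁻ u in Ioo (0:ℝ) 1, F (x, u) := by
            simp_rw [hFind]
            rw [lintegral_indicator measurableSet_Iio, Measure.restrict_restrict measurableSet_Iio,
              hseteq]
    · filter_upwards [ae_restrict_mem measurableSet_Ioo] with x hx
      apply setIntegral_nonneg measurableSet_Ioo
      intro y hy
      exact Hf_nonneg (by nlinarith [hx.1, hy.1])
    · exact (AEStronglyMeasurable.integral_prod_right'
        (f := fun p : ℝ × ℝ => Hf z (p.1 * p.2))
        (((Hf_meas z).comp (measurable_fst.mul measurable_snd)).aestronglyMeasurable))
  rw [hL, hswap, hR]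

/-- For `z > 0`, `β(z,2) = ∫₀^∞ x cosh(x)^{-z} dx = 2 ∫₀¹∫₀¹ (2xy)^{z-1}/(1+x²y²)^z dx dy`. -/
theorem genBeta_two_double_integral (z : ℝ) (hz : 0 < z) :
    ∫ x in Set.Ioi (0 : ℝ), x / Real.cosh x ^ z =
      2 * ∫ x in (0 : ℝ)..1, ∫ y in (0 : ℝ)..1,
        (2 * x * y) ^ (z - 1) / (1 + x ^ 2 * y ^ 2) ^ z := by
  have hRHS : ∫ x in (0:ℝ)..1, ∫ y in (0:ℝ)..1, (2*x*y)^(z-1) / (1+x^2*y^2)^z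
      = ∫ x in Ioo (0:ℝ) 1, ∫ y in Ioo (0:ℝ) 1, Hf z (x*y) := by
    rw [intervalIntegral.integral_of_le zero_le_one, integral_Ioc_eq_integral_Ioo]
    apply setIntegral_congr_fun measurableSet_Ioo
    intro x _
    simp only []
    rw [intervalIntegral.integral_of_le zero_le_one, integral_Ioc_eq_integral_Ioo]
    apply setIntegral_congr_fun measurableSet_Ioo
    intro y _
    unfold Hf
    simp only [mul_assoc, mul_pow]
  rw [hRHS, cov_A z, ← key z (Hf_int z hz)]
  rw [← integral_const_mul]
  apply setIntegral_congr_fun measurableSet_Ioo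
  intro u _
  ring
end

section
/- The Catalan constant satisfies the Beukers-type double integral representation G = (1/2) ∫₀¹∫₀¹ dx dy / ((x+y)(1−xy)). -/
open Real MeasureTheory Set intervalIntegral Filter


lemma intInt_neg_log : IntervalIntegrable (fun x : ℝ => -Real.log x) volume 0 1 := by
  rw [intervalIntegrable_iff_integrableOn_Ioc_of_le (by norm_num)]
  apply integrableOn_deriv_of_nonneg
    ((continuous_id.sub Real.continuous_mul_log).continuousOn)
  · intro x hx
    have h := (hasDerivAt_id x).sub (Real.hasDerivAt_mul_log (ne_of_gt hx.1))
    refine h.congr_deriv ?_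
    ring
  · intro x hx
    simpa using Real.log_nonpos (le_of_lt hx.1) (le_of_lt hx.2)

lemma intInt_pow_neg_log (n : ℕ) :
    IntervalIntegrable (fun x : ℝ => x ^ (2 * n) * (-Real.log x)) volume 0 1 := by
  apply intInt_neg_log.mono_fun
  · apply Measurable.aestronglyMeasurable
    exact (measurable_id.pow_const _).mul Real.measurable_log.neg
  · filter_upwards [ae_restrict_mem measurableSet_uIoc] with x hx
    rw [Set.uIoc_of_le (by norm_num : (0:ℝ) ≤ 1)] at hx
    have h2 : 0 ≤ -Real.log x := by
      simpa using Real.log_nonpos (le_of_lt hx.1) hx.2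
    have h3 : x ^ (2 * n) ≤ 1 := pow_le_one₀ (le_of_lt hx.1) hx.2
    have h4 : (0:ℝ) ≤ x ^ (2 * n) := pow_nonneg (le_of_lt hx.1) _
    rw [Real.norm_eq_abs, Real.norm_eq_abs, abs_of_nonneg (mul_nonneg h4 h2),
      abs_of_nonneg h2]
    nlinarith

lemma integral_pow_neg_log (n : ℕ) :
    ∫ x in (0:ℝ)..1, x ^ (2 * n) * (-Real.log x) = 1 / (2 * (n:ℝ) + 1) ^ 2 := by
  set k : ℕ := 2 * n + 1 with hk
  have hkr : (k : ℝ) = 2 * (n:ℝ) + 1 := by push_cast [hk]; ring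
  have hkpos : (0:ℝ) < (k:ℝ) := by rw [hkr]; positivity
  have hK : (k:ℝ) ≠ 0 := ne_of_gt hkpos
  set F : ℝ → ℝ := fun x => x ^ k / (k:ℝ) ^ 2 - x ^ (2*n) * (x * Real.log x) / (k:ℝ) with hF
  have hFcont : ContinuousOn F (Icc (0:ℝ) 1) := by
    apply ContinuousOn.sub
    · exact (continuous_pow k).continuousOn.div_const _
    · exact (((continuous_pow (2*n)).mul Real.continuous_mul_log).continuousOn).div_const _
  have hFderiv : ∀ x ∈ Ioo (0:ℝ) 1,
      HasDerivWithinAt F (x ^ (2*n) * (-Real.log x)) (Ioi x) x := by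
    intro x hx
    have hx0 : x ≠ 0 := ne_of_gt hx.1
    have h1 : HasDerivAt (fun x : ℝ => x ^ k) ((k:ℝ) * x ^ (2*n)) x := by
      have := hasDerivAt_pow k x
      simpa [hk] using this
    have h2 := (hasDerivAt_pow (2*n) x).mul (Real.hasDerivAt_mul_log hx0)
    have h3 := ((h1.div_const ((k:ℝ)^2)).sub (h2.div_const (k:ℝ)))
    have hxpow : ((2*n:ℕ):ℝ) * (x ^ (2*n-1) * x) = ((2*n:ℕ):ℝ) * x ^ (2*n) := by
      rcases n with _ | m
      · simp
      · rw [show 2*(m+1) = (2*m+1)+1 from by omega, pow_succ]; norm_num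
    have h2n : ((2*n : ℕ):ℝ) = (k:ℝ) - 1 := by push_cast [hk]; ring
    have key : (k:ℝ) * x ^ (2*n) / (k:ℝ)^2 -
        (((2*n:ℕ):ℝ) * x ^ (2*n-1) * (x * Real.log x) + x ^ (2*n) * (Real.log x + 1)) / (k:ℝ)
        = x ^ (2*n) * (-Real.log x) := by
      rw [show ((2*n:ℕ):ℝ) * x ^ (2*n-1) * (x * Real.log x)
          = (((2*n:ℕ):ℝ) * (x ^ (2*n-1) * x)) * Real.log x from by ring, hxpow, h2n]
      field_simp
      ring
    rw [← key]
    exact h3.hasDerivWithinAt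
  have := intervalIntegral.integral_eq_sub_of_hasDeriv_right_of_le (by norm_num : (0:ℝ) ≤ 1)
    hFcont hFderiv (intInt_pow_neg_log n)
  rw [this]
  have hF1 : F 1 = 1 / (k:ℝ)^2 := by simp [hF]
  have hF0 : F 0 = 0 := by simp [hF, zero_pow (by omega : k ≠ 0)]
  rw [hF1, hF0, hkr]
  ring

lemma summable_inv_sq_odd : Summable (fun n : ℕ => 1 / (2 * (n:ℝ) + 1) ^ 2) := by
  have hbase : Summable (fun n : ℕ => 1 / ((n:ℝ)) ^ 2) := summable_one_div_nat_pow.mpr (by norm_num)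
  have h1 : Summable (fun n : ℕ => 1 / (((n:ℝ)) + 1) ^ 2) := by
    have := (summable_nat_add_iff (f := fun n : ℕ => 1 / ((n:ℝ)) ^ 2) 1).mpr hbase
    simpa [add_comm] using this
  apply Summable.of_nonneg_of_le (fun n => by positivity) _ h1
  intro n
  apply one_div_le_one_div_of_le (by positivity)
  have : (0:ℝ) ≤ (n:ℝ) := Nat.cast_nonneg n
  nlinarith

lemma catalan_integral :
    ∫ x in (0:ℝ)..1, -Real.log x / (1 + x ^ 2) = ∑' n : ℕ, (-1) ^ n / (2 * (n:ℝ) + 1) ^ 2 := by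
  set f : ℕ → ℝ → ℝ := fun n x => (-1:ℝ) ^ n * (x ^ (2 * n) * (-Real.log x)) with hf
  have hptwise : ∀ x ∈ Ioc (0:ℝ) 1, (∑' n, f n x) = -Real.log x / (1 + x ^ 2) := by
    intro x hx
    rcases eq_or_lt_of_le hx.2 with h1 | h1
    · simp [hf, h1]
    · have hnorm : ‖-x ^ 2‖ < 1 := by
        rw [norm_neg, Real.norm_eq_abs, abs_of_nonneg (sq_nonneg x)]
        nlinarith [hx.1]
      have hfn : ∀ n, f n x = (-x ^ 2) ^ n * (-Real.log x) := by
        intro n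
        rw [hf]
        simp only [neg_pow (x^2), ← pow_mul]
        ring
      rw [tsum_congr hfn, tsum_mul_right, tsum_geometric_of_norm_lt_one hnorm,
        sub_neg_eq_add, inv_mul_eq_div]
  have hmeas : ∀ n, AEStronglyMeasurable (f n) (volume.restrict (Ioc (0:ℝ) 1)) := by
    intro n
    apply Measurable.aestronglyMeasurable
    exact measurable_const.mul ((measurable_id.pow_const _).mul Real.measurable_log.neg)
  have hint : ∀ n, IntegrableOn (f n) (Ioc (0:ℝ) 1) volume := by
    intro n
    have := ((intervalIntegrable_iff_integrableOn_Ioc_of_le (by norm_num : (0:ℝ) ≤ 1)).mp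
      (intInt_pow_neg_log n))
    exact this.const_mul _
  have hnormval : ∀ n, ∫ x in Ioc (0:ℝ) 1, ‖f n x‖ = 1 / (2 * (n:ℝ) + 1) ^ 2 := by
    intro n
    have : ∫ x in Ioc (0:ℝ) 1, ‖f n x‖ = ∫ x in Ioc (0:ℝ) 1, x ^ (2 * n) * (-Real.log x) := by
      apply setIntegral_congr_fun measurableSet_Ioc
      intro x hx
      have h2 : 0 ≤ -Real.log x := by
        simpa using Real.log_nonpos (le_of_lt hx.1) hx.2
      have h4 : (0:ℝ) ≤ x ^ (2 * n) := pow_nonneg (le_of_lt hx.1) _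
      rw [hf]
      simp only []
      rw [norm_mul, norm_mul, norm_pow, norm_pow, Real.norm_eq_abs, Real.norm_eq_abs,
        Real.norm_eq_abs, abs_neg, abs_one, one_pow, one_mul,
        abs_of_nonneg (le_of_lt hx.1), abs_of_nonneg h2]
    rw [this, ← intervalIntegral.integral_of_le (by norm_num : (0:ℝ) ≤ 1),
      integral_pow_neg_log]
  have hlint : (∑' n, ∫⁻ x in Ioc (0:ℝ) 1, ‖f n x‖₊) ≠ ⊤ := by
    have heq : ∀ n, ∫⁻ x in Ioc (0:ℝ) 1, ‖f n x‖₊ = ENNReal.ofReal (1 / (2 * (n:ℝ) + 1) ^ 2) := by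
      intro n
      simp only [← enorm_eq_nnnorm]
      rw [← ofReal_integral_norm_eq_lintegral_enorm (hint n), hnormval n]
    rw [tsum_congr heq, ← ENNReal.ofReal_tsum_of_nonneg (fun n => by positivity)
      summable_inv_sq_odd]
    exact ENNReal.ofReal_ne_top
  have hswap := MeasureTheory.integral_tsum hmeas hlint
  rw [intervalIntegral.integral_of_le (by norm_num : (0:ℝ) ≤ 1),
    ← setIntegral_congr_fun measurableSet_Ioc hptwise, hswap]
  apply tsum_congr
  intro n
  have : ∫ x in Ioc (0:ℝ) 1, f n x
      = (-1:ℝ) ^ n * ∫ x in Ioc (0:ℝ) 1, x ^ (2*n) * (-Real.log x) := by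
    rw [hf]; exact MeasureTheory.integral_const_mul _ _
  rw [this, ← intervalIntegral.integral_of_le (by norm_num : (0:ℝ) ≤ 1),
    integral_pow_neg_log]
  ring

lemma intInt_neg_log_one_sub :
    IntervalIntegrable (fun x : ℝ => -Real.log (1 - x)) volume 0 1 := by
  have := (intInt_neg_log.comp_sub_left 1).symm
  simpa using this

lemma intInt_neg_log_div : IntervalIntegrable (fun x : ℝ => -Real.log x / (1 + x ^ 2)) volume 0 1 := by
  apply intInt_neg_log.mono_fun
  · apply Measurable.aestronglyMeasurable
    exact (Real.measurable_log.neg).div ((measurable_const.add ((measurable_id.pow_const 2))))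
  · filter_upwards [ae_restrict_mem measurableSet_uIoc] with x hx
    rw [Set.uIoc_of_le (by norm_num : (0:ℝ) ≤ 1)] at hx
    have h1 : (0:ℝ) < 1 + x ^ 2 := by positivity
    have h2 : 0 ≤ -Real.log x := by
      simpa using Real.log_nonpos (le_of_lt hx.1) hx.2
    rw [Real.norm_eq_abs, Real.norm_eq_abs, abs_of_nonneg (by positivity), abs_of_nonneg h2]
    rw [div_le_iff₀ h1]
    nlinarith [sq_nonneg x]

lemma intInt_h : IntervalIntegrable
    (fun x : ℝ => (Real.log (1 + x) - Real.log (1 - x)) / (1 + x ^ 2)) volume 0 1 := by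
  apply IntervalIntegrable.mono_fun (intervalIntegrable_const.add intInt_neg_log_one_sub)
  · apply Measurable.aestronglyMeasurable
    exact ((Real.measurable_log.comp (measurable_const.add measurable_id)).sub
      (Real.measurable_log.comp (measurable_const.sub measurable_id))).div
      (measurable_const.add (measurable_id.pow_const 2))
  · filter_upwards [ae_restrict_mem measurableSet_uIoc] with x hx
    rw [Set.uIoc_of_le (by norm_num : (0:ℝ) ≤ 1)] at hx
    have h0 : (0:ℝ) < x := hx.1
    have h1 : x ≤ 1 := hx.2
    have ha : 0 ≤ Real.log (1 + x) := Real.log_nonneg (by linarith)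
    have hb : Real.log (1 + x) ≤ Real.log 2 :=
      Real.log_le_log (by linarith) (by linarith)
    have hc : 0 ≤ -Real.log (1 - x) := by
      simpa using Real.log_nonpos (by linarith) (by linarith)
    have hd : (1:ℝ) ≤ 1 + x ^ 2 := by nlinarith
    have hnum : 0 ≤ Real.log (1 + x) - Real.log (1 - x) := by linarith
    have hlog2 : 0 ≤ Real.log 2 := Real.log_nonneg (by norm_num)
    rw [Real.norm_eq_abs, Real.norm_eq_abs, abs_of_nonneg (by positivity),
      abs_of_nonneg (by linarith : (0:ℝ) ≤ Real.log 2 + -Real.log (1 - x))]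
    rw [div_le_iff₀ (by linarith)]
    nlinarith

lemma sub_lemma :
    ∫ x in (0:ℝ)..1, (Real.log (1 + x) - Real.log (1 - x)) / (1 + x ^ 2)
      = ∫ t in (0:ℝ)..1, -Real.log t / (1 + t ^ 2) := by
  set g : ℝ → ℝ := fun t => -Real.log t / (1 + t ^ 2) with hg
  set h : ℝ → ℝ := fun x => (Real.log (1 + x) - Real.log (1 - x)) / (1 + x ^ 2) with hh
  set φ : ℝ → ℝ := fun x => (1 - x) / (1 + x) with hφ
  have hgcont : ContinuousOn g {t : ℝ | t ≠ 0} := by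
    apply ContinuousOn.div
    · exact (Real.continuousOn_log.mono (by intro t ht; exact ht)).neg
    · exact (continuous_const.add (continuous_pow 2)).continuousOn
    · intro t _; positivity
  have key : ∀ b ∈ Ico (0:ℝ) 1, ∫ x in (0:ℝ)..b, h x = ∫ t in φ b..1, g t := by
    intro b hb
    have huIcc : uIcc (0:ℝ) b = Icc 0 b := uIcc_of_le hb.1
    have hsub : ∀ x ∈ uIcc (0:ℝ) b, 0 ≤ x ∧ x < 1 := by
      intro x hxx
      rw [huIcc] at hxx
      exact ⟨hxx.1, lt_of_le_of_lt hxx.2 hb.2⟩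
    have hder : ∀ x ∈ uIcc (0:ℝ) b, HasDerivAt φ (-2 / (1 + x) ^ 2) x := by
      intro x hxx
      obtain ⟨hx0, _⟩ := hsub x hxx
      have hden : (1:ℝ) + x ≠ 0 := by linarith
      have h1 : HasDerivAt (fun x : ℝ => 1 - x) (-1) x := by
        simpa using (hasDerivAt_id x).const_sub 1
      have h2 : HasDerivAt (fun x : ℝ => 1 + x) 1 x := by
        simpa using (hasDerivAt_id x).const_add 1
      have := h1.div h2 hden
      refine this.congr_deriv ?_
      field_simp
      ring
    have hcont' : ContinuousOn (fun x : ℝ => -2 / (1 + x) ^ 2) (uIcc (0:ℝ) b) := by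
      apply ContinuousOn.div continuousOn_const
      · exact ((continuous_const.add continuous_id).pow 2).continuousOn
      · intro x hxx
        obtain ⟨hx0, _⟩ := hsub x hxx
        positivity
    have himg : ContinuousOn g (φ '' uIcc (0:ℝ) b) := by
      apply hgcont.mono
      rintro t ⟨x, hxx, rfl⟩
      obtain ⟨hx0, hx1⟩ := hsub x hxx
      have : 0 < (1 - x) / (1 + x) := by
        apply div_pos <;> linarith
      simpa [hφ] using ne_of_gt this
    have hchg := intervalIntegral.integral_comp_smul_deriv' hder hcont' himg
    simp only [Function.comp] at hchg
    have heq : ∀ x ∈ uIcc (0:ℝ) b, (-2 / (1 + x) ^ 2) • g (φ x) = -h x := by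
      intro x hxx
      obtain ⟨hx0, hx1⟩ := hsub x hxx
      have ha : (0:ℝ) < 1 - x := by linarith
      have hb' : (0:ℝ) < 1 + x := by linarith
      have hlog : Real.log ((1 - x) / (1 + x)) = Real.log (1 - x) - Real.log (1 + x) :=
        Real.log_div (ne_of_gt ha) (ne_of_gt hb')
      have hden : (1:ℝ) + ((1 - x) / (1 + x)) ^ 2 = 2 * (1 + x ^ 2) / (1 + x) ^ 2 := by
        field_simp
        ring
      rw [smul_eq_mul, hg, hh]
      simp only []
      rw [hφ]
      simp only []
      rw [hlog, hden]
      have h2 : (0:ℝ) < 1 + x ^ 2 := by positivity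
      field_simp
      ring
    have : ∫ x in (0:ℝ)..b, (-2 / (1 + x) ^ 2) • g (φ x) = ∫ x in (0:ℝ)..b, -h x :=
      intervalIntegral.integral_congr heq
    have hφ0 : φ 0 = 1 := by simp [hφ]
    rw [this, intervalIntegral.integral_neg] at hchg
    rw [hφ0] at hchg
    have := neg_eq_iff_eq_neg.mp hchg
    rw [this, ← intervalIntegral.integral_symm]
  -- limits
  have hIcc : uIcc (0:ℝ) 1 = Icc 0 1 := uIcc_of_le (by norm_num)
  have h1mem : (1:ℝ) ∈ uIcc (0:ℝ) 1 := by rw [hIcc]; exact ⟨by norm_num, le_rfl⟩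
  have h0mem : (0:ℝ) ∈ uIcc (0:ℝ) 1 := by rw [hIcc]; exact ⟨le_rfl, by norm_num⟩
  have hginteg : IntegrableOn g (uIcc (0:ℝ) 1) volume := by
    rw [hIcc]
    exact (intervalIntegrable_iff_integrableOn_Icc_of_le (by norm_num)).mp intInt_neg_log_div
  have hhinteg : IntegrableOn h (uIcc (0:ℝ) 1) volume := by
    rw [hIcc]
    exact (intervalIntegrable_iff_integrableOn_Icc_of_le (by norm_num)).mp intInt_h
  set l : Filter ℝ := nhdsWithin 1 (Ico (0:ℝ) 1) with hl
  have hlne : l.NeBot := by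
    rw [hl]
    apply mem_closure_iff_nhdsWithin_neBot.mp
    rw [closure_Ico (by norm_num : (0:ℝ) ≠ 1)]
    exact ⟨by norm_num, le_rfl⟩
  have hT1 : Tendsto (fun b => ∫ x in (0:ℝ)..b, h x) l (nhds (∫ x in (0:ℝ)..1, h x)) := by
    have hcont := intervalIntegral.continuousOn_primitive_interval hhinteg
    have := (hcont 1 h1mem).tendsto
    rw [hIcc] at this
    exact this.mono_left (nhdsWithin_mono 1 Ico_subset_Icc_self)
  have hφt : Tendsto φ l (nhdsWithin 0 (Icc (0:ℝ) 1)) := by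
    rw [tendsto_nhdsWithin_iff]
    constructor
    · have hφc : ContinuousAt φ 1 := by
        apply ContinuousAt.div
        · exact (continuous_const.sub continuous_id).continuousAt
        · exact (continuous_const.add continuous_id).continuousAt
        · norm_num
      have hφ1 : φ 1 = 0 := by simp [hφ]
      have := hφc.continuousWithinAt (s := Ico (0:ℝ) 1)
      rw [ContinuousWithinAt, hφ1] at this
      exact this
    · filter_upwards [eventually_mem_nhdsWithin] with b hb
      constructor
      · apply div_nonneg <;> [linarith [hb.2]; linarith [hb.1]]
      · rw [div_le_one (by linarith [hb.1])]
        linarith [hb.1]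
  have hT2 : Tendsto (fun b => ∫ t in φ b..1, g t) l (nhds (∫ t in (0:ℝ)..1, g t)) := by
    have hcontg := intervalIntegral.continuousOn_primitive_interval_left hginteg
    have := (hcontg 0 h0mem).tendsto
    rw [hIcc] at this
    exact this.comp hφt
  have hT1' : Tendsto (fun b => ∫ x in (0:ℝ)..b, h x) l (nhds (∫ t in (0:ℝ)..1, g t)) := by
    apply hT2.congr'
    filter_upwards [eventually_mem_nhdsWithin] with b hb
    exact (key b hb).symm
  exact tendsto_nhds_unique hT1 hT1'

lemma inner_integral {x : ℝ} (hx : x ∈ Ioo (0:ℝ) 1) :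
    ∫ y in (0:ℝ)..1, 1 / ((x + y) * (1 - x * y))
      = (Real.log (1 + x) - Real.log (1 - x)) / (1 + x ^ 2) + -Real.log x / (1 + x ^ 2) := by
  obtain ⟨hx0, hx1⟩ := hx
  set F : ℝ → ℝ := fun y => (Real.log (x + y) - Real.log (1 - x * y)) / (1 + x ^ 2) with hF
  have hden : ∀ y ∈ uIcc (0:ℝ) 1, 0 < x + y ∧ 0 < 1 - x * y := by
    intro y hy
    rw [uIcc_of_le (by norm_num : (0:ℝ) ≤ 1)] at hy
    constructor
    · linarith [hy.1]
    · nlinarith [hy.2, hy.1]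
  have hderiv : ∀ y ∈ uIcc (0:ℝ) 1, HasDerivAt F (1 / ((x + y) * (1 - x * y))) y := by
    intro y hy
    obtain ⟨h1, h2⟩ := hden y hy
    have d1 : HasDerivAt (fun y : ℝ => x + y) 1 y := by
      simpa using (hasDerivAt_id y).const_add x
    have d2 : HasDerivAt (fun y : ℝ => 1 - x * y) (-x) y := by
      simpa using ((hasDerivAt_id y).const_mul x).const_sub 1
    have l1 := d1.log (ne_of_gt h1)
    have l2 := d2.log (ne_of_gt h2)
    have := (l1.sub l2).div_const (1 + x ^ 2)
    refine this.congr_deriv ?_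
    have hx2 : (0:ℝ) < 1 + x ^ 2 := by positivity
    field_simp
    ring
  have hcont : IntervalIntegrable (fun y : ℝ => 1 / ((x + y) * (1 - x * y))) volume 0 1 := by
    apply ContinuousOn.intervalIntegrable
    apply ContinuousOn.div continuousOn_const
    · exact ((continuous_const.add continuous_id).mul
        (continuous_const.sub (continuous_const.mul continuous_id))).continuousOn
    · intro y hy
      obtain ⟨h1, h2⟩ := hden y hy
      positivity
  rw [intervalIntegral.integral_eq_sub_of_hasDerivAt hderiv hcont]
  have e0 : F 0 = (Real.log x - 0) / (1 + x ^ 2) := by simp [hF]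
  have e1 : F 1 = (Real.log (1 + x) - Real.log (1 - x)) / (1 + x ^ 2) := by
    simp [hF, add_comm x 1]
  rw [e0, e1]
  ring

/-- Beukers-type integral for Catalan's constant:
`G = (1/2) ∫₀¹∫₀¹ dx dy / ((x+y)(1−xy))`. -/
theorem catalan_beukers_integral :
    (∑' n : ℕ, (-1) ^ n / (2 * (n : ℝ) + 1) ^ 2) =
      (1 / 2) * ∫ x in (0 : ℝ)..1, ∫ y in (0 : ℝ)..1, 1 / ((x + y) * (1 - x * y)) := by
  have hae : ∀ᵐ (x:ℝ), x ∈ Set.uIoc (0:ℝ) 1 → (∫ y in (0:ℝ)..1, 1 / ((x + y) * (1 - x * y)))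
      = (Real.log (1 + x) - Real.log (1 - x)) / (1 + x ^ 2) + -Real.log x / (1 + x ^ 2) := by
    have h1 : ({(1:ℝ)}ᶜ : Set ℝ) ∈ ae (volume : Measure ℝ) :=
      compl_mem_ae_iff.mpr Real.volume_singleton
    filter_upwards [h1] with x hx1 hxI
    rw [Set.uIoc_of_le (by norm_num : (0:ℝ) ≤ 1)] at hxI
    exact inner_integral ⟨hxI.1, lt_of_le_of_ne hxI.2 hx1⟩
  rw [intervalIntegral.integral_congr_ae hae,
    intervalIntegral.integral_add intInt_h intInt_neg_log_div, sub_lemma, catalan_integral]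
  ring
end

section
/- ∫₀¹∫₀¹ dx dy / ((1 + x²y²)(1 − xy)) = G/2 + (9/16)·ζ(2), where G is Catalan's constant and ζ the Riemann zeta function. -/
open MeasureTheory Real Set

namespace CatalanZetaAux

lemma series_eq (t : ℝ) (h0 : 0 ≤ t) (h1 : t < 1) :
    HasSum (fun k : ℕ => t ^ (4 * k) + t ^ (4 * k + 1)) (1 / ((1 + t ^ 2) * (1 - t))) := by
  have h4 : t ^ 4 < 1 := pow_lt_one₀ h0 h1 (by norm_num)
  have hg : HasSum (fun k : ℕ => (t ^ 4) ^ k) (1 - t ^ 4)⁻¹ :=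
    hasSum_geometric_of_lt_one (by positivity) h4
  have h := hg.mul_left (1 + t)
  have heq : (fun k : ℕ => (1 + t) * (t ^ 4) ^ k)
      = fun k : ℕ => t ^ (4 * k) + t ^ (4 * k + 1) := by
    funext k; rw [← pow_mul]; ring
  rw [heq] at h
  convert h using 1
  · rfl
  have ht2 : (0:ℝ) < 1 + t ^ 2 := by positivity
  have ht1 : (0:ℝ) < 1 - t := by linarith
  have h4' : (0:ℝ) < 1 - t ^ 4 := by linarith
  field_simp
  ring

lemma integral_pow_Ioc (n : ℕ) : (∫ y in Ioc (0:ℝ) 1, y ^ n) = 1 / ((n : ℝ) + 1) := by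
  rw [← intervalIntegral.integral_of_le zero_le_one, integral_pow]
  norm_num

lemma term_integral (x : ℝ) (k : ℕ) :
    (∫ y in Ioc (0:ℝ) 1, ((x * y) ^ (4 * k) + (x * y) ^ (4 * k + 1))) =
      x ^ (4 * k) / (4 * (k:ℝ) + 1) + x ^ (4 * k + 1) / (4 * (k:ℝ) + 2) := by
  have h1 : ∀ y : ℝ, (x * y) ^ (4 * k) + (x * y) ^ (4 * k + 1)
      = x ^ (4 * k) * y ^ (4 * k) + x ^ (4 * k + 1) * y ^ (4 * k + 1) := fun y => by
    rw [mul_pow, mul_pow]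
  simp_rw [h1]
  rw [integral_add, integral_const_mul, integral_const_mul, integral_pow_Ioc, integral_pow_Ioc]
  · push_cast; ring
  · exact ((continuous_const.mul (continuous_pow _)).integrableOn_Ioc)
  · exact ((continuous_const.mul (continuous_pow _)).integrableOn_Ioc)

lemma inner_eq (x : ℝ) (hx0 : 0 ≤ x) (hx1 : x < 1) :
    (∫ y in (0:ℝ)..1, 1 / ((1 + x ^ 2 * y ^ 2) * (1 - x * y))) =
      ∑' k : ℕ, (x ^ (4 * k) / (4 * (k:ℝ) + 1) + x ^ (4 * k + 1) / (4 * (k:ℝ) + 2)) := by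
  rw [intervalIntegral.integral_of_le zero_le_one]
  have hpt : EqOn (fun y : ℝ => 1 / ((1 + x ^ 2 * y ^ 2) * (1 - x * y)))
      (fun y : ℝ => ∑' k : ℕ, ((x * y) ^ (4 * k) + (x * y) ^ (4 * k + 1))) (Ioc 0 1) := by
    intro y hy
    have h0 : 0 ≤ x * y := mul_nonneg hx0 hy.1.le
    have h1 : x * y < 1 := lt_of_le_of_lt (mul_le_of_le_one_right hx0 hy.2) hx1
    simp only
    rw [(series_eq (x * y) h0 h1).tsum_eq]
    congr 1
    ring
  rw [setIntegral_congr_fun measurableSet_Ioc hpt]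
  have hint : ∀ k : ℕ, Integrable
      (fun y : ℝ => (x * y) ^ (4 * k) + (x * y) ^ (4 * k + 1))
      (volume.restrict (Ioc 0 1)) := fun k =>
    (((continuous_const.mul continuous_id).pow _).add
      ((continuous_const.mul continuous_id).pow _)).integrableOn_Ioc
  have hnorm : (fun k : ℕ => ∫ y in Ioc (0:ℝ) 1, ‖(x * y) ^ (4 * k) + (x * y) ^ (4 * k + 1)‖)
      = fun k : ℕ => x ^ (4 * k) / (4 * (k:ℝ) + 1) + x ^ (4 * k + 1) / (4 * (k:ℝ) + 2) := by
    funext k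
    rw [← term_integral x k]
    refine setIntegral_congr_fun measurableSet_Ioc fun y hy => ?_
    have h0 : 0 ≤ x * y := mul_nonneg hx0 hy.1.le
    exact Real.norm_of_nonneg (add_nonneg (pow_nonneg h0 _) (pow_nonneg h0 _))
  have hsum : Summable fun k : ℕ =>
      ∫ y in Ioc (0:ℝ) 1, ‖(x * y) ^ (4 * k) + (x * y) ^ (4 * k + 1)‖ := by
    rw [hnorm]
    have hk : ∀ k : ℕ, (0:ℝ) ≤ (k:ℝ) := fun k => Nat.cast_nonneg k
    refine Summable.of_nonneg_of_le (fun k => ?_) (fun k => ?_)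
      (((summable_geometric_of_lt_one (by positivity)
        (pow_lt_one₀ hx0 hx1 (by norm_num) : x ^ 4 < 1)).mul_left 2))
    · have := hk k
      have h1 : (0:ℝ) < 4 * (k:ℝ) + 1 := by linarith
      have h2 : (0:ℝ) < 4 * (k:ℝ) + 2 := by linarith
      positivity
    · have := hk k
      have hd1 : (1:ℝ) ≤ 4 * (k:ℝ) + 1 := by linarith
      have hd2 : (1:ℝ) ≤ 4 * (k:ℝ) + 2 := by linarith
      have e1 : x ^ (4 * k) / (4 * (k:ℝ) + 1) ≤ x ^ (4 * k) :=
        div_le_self (pow_nonneg hx0 _) hd1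
      have e2 : x ^ (4 * k + 1) / (4 * (k:ℝ) + 2) ≤ x ^ (4 * k + 1) :=
        div_le_self (pow_nonneg hx0 _) hd2
      have e3 : x ^ (4 * k + 1) ≤ x ^ (4 * k) :=
        pow_le_pow_of_le_one hx0 hx1.le (by omega)
      have e4 : (x ^ 4) ^ k = x ^ (4 * k) := by rw [← pow_mul]
      calc x ^ (4 * k) / (4 * (k:ℝ) + 1) + x ^ (4 * k + 1) / (4 * (k:ℝ) + 2)
          ≤ x ^ (4 * k) + x ^ (4 * k) := by linarith
        _ = 2 * (x ^ 4) ^ k := by rw [e4]; ring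
  rw [← MeasureTheory.integral_tsum_of_summable_integral_norm hint hsum]
  exact tsum_congr fun k => term_integral x k

lemma outer_term (k : ℕ) :
    (∫ x in Ioc (0:ℝ) 1, (x ^ (4 * k) / (4 * (k:ℝ) + 1) + x ^ (4 * k + 1) / (4 * (k:ℝ) + 2)))
      = 1 / (4 * (k:ℝ) + 1) ^ 2 + 1 / (4 * (k:ℝ) + 2) ^ 2 := by
  have hk : (0:ℝ) ≤ (k:ℝ) := Nat.cast_nonneg k
  have h1 : (4 * (k:ℝ) + 1) ≠ 0 := by positivity
  have h2 : (4 * (k:ℝ) + 2) ≠ 0 := by positivity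
  rw [integral_add, integral_div, integral_div, integral_pow_Ioc, integral_pow_Ioc]
  · push_cast
    field_simp
    ring
  · exact ((continuous_pow _).div_const _).integrableOn_Ioc
  · exact ((continuous_pow _).div_const _).integrableOn_Ioc

end CatalanZetaAux

open CatalanZetaAux

set_option maxHeartbeats 1000000 in
/-- `∫₀¹∫₀¹ dx dy / ((1+x²y²)(1−xy)) = G/2 + (9/16) ζ(2)`. -/
theorem double_integral_catalan_zeta :
    (∫ x in (0 : ℝ)..1, ∫ y in (0 : ℝ)..1, 1 / ((1 + x ^ 2 * y ^ 2) * (1 - x * y))) =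
      (∑' n : ℕ, (-1) ^ n / (2 * (n : ℝ) + 1) ^ 2) / 2 +
        (9 / 16) * (Real.pi ^ 2 / 6) := by
  -- Step 1: the sum side.
  have hbasel : HasSum (fun n : ℕ => (1:ℝ) / (n:ℝ) ^ 2) (π ^ 2 / 6) := hasSum_zeta_two
  -- Even part of Basel
  have hFe : HasSum (fun k : ℕ => (1:ℝ) / ((2 * k : ℕ) : ℝ) ^ 2) (π ^ 2 / 24) := by
    have h := hbasel.mul_left (1 / 4)
    have heq : (fun k : ℕ => (1:ℝ) / 4 * (1 / (k:ℝ) ^ 2))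
        = fun k : ℕ => (1:ℝ) / ((2 * k : ℕ) : ℝ) ^ 2 := by
      funext k
      push_cast
      rw [mul_pow, div_mul_div_comm]
      norm_num
    rw [heq] at h
    convert h using 1
    · rfl
    ring
  -- Odd part of Basel
  obtain ⟨a, ha⟩ : Summable ((fun n : ℕ => (1:ℝ) / (n:ℝ) ^ 2) ∘ (fun k : ℕ => 2 * k + 1)) :=
    hbasel.summable.comp_injective (fun i j hij => by simpa using hij)
  rw [Function.comp_def] at ha
  have hfull : HasSum (fun n : ℕ => (1:ℝ) / (n:ℝ) ^ 2) (π ^ 2 / 24 + a) :=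
    HasSum.even_add_odd hFe ha
  have haval : a = π ^ 2 / 8 := by
    have := hbasel.unique hfull
    linarith
  rw [haval] at ha
  have hOdd : HasSum (fun k : ℕ => (1:ℝ) / (2 * (k:ℝ) + 1) ^ 2) (π ^ 2 / 8) := by
    have heq : (fun k : ℕ => (1:ℝ) / ((2 * k + 1 : ℕ) : ℝ) ^ 2)
        = fun k : ℕ => (1:ℝ) / (2 * (k:ℝ) + 1) ^ 2 := by
      funext k; push_cast; ring_nf
    rwa [heq] at ha
  -- Split odd sum into 4k+1 and 4k+3 parts.
  obtain ⟨A, hA'⟩ : Summable ((fun k : ℕ => (1:ℝ) / (2 * (k:ℝ) + 1) ^ 2) ∘ (fun j : ℕ => 2 * j)) :=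
    hOdd.summable.comp_injective (fun i j hij => by simpa using hij)
  obtain ⟨B, hB'⟩ : Summable ((fun k : ℕ => (1:ℝ) / (2 * (k:ℝ) + 1) ^ 2)
      ∘ (fun j : ℕ => 2 * j + 1)) :=
    hOdd.summable.comp_injective (fun i j hij => by simpa using hij)
  have hA : HasSum (fun j : ℕ => (1:ℝ) / (4 * (j:ℝ) + 1) ^ 2) A := by
    have heq : ((fun k : ℕ => (1:ℝ) / (2 * (k:ℝ) + 1) ^ 2) ∘ (fun j : ℕ => 2 * j))
        = fun j : ℕ => (1:ℝ) / (4 * (j:ℝ) + 1) ^ 2 := by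
      funext j; simp only [Function.comp]; push_cast; ring_nf
    rwa [heq] at hA'
  have hB : HasSum (fun j : ℕ => (1:ℝ) / (4 * (j:ℝ) + 3) ^ 2) B := by
    have heq : ((fun k : ℕ => (1:ℝ) / (2 * (k:ℝ) + 1) ^ 2) ∘ (fun j : ℕ => 2 * j + 1))
        = fun j : ℕ => (1:ℝ) / (4 * (j:ℝ) + 3) ^ 2 := by
      funext j; simp only [Function.comp]; push_cast; ring_nf
    rwa [heq] at hB'
  have hAB : A + B = π ^ 2 / 8 := by
    have he : HasSum (fun j : ℕ => (1:ℝ) / (2 * ((2 * j : ℕ):ℝ) + 1) ^ 2) A := by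
      have heq : (fun j : ℕ => (1:ℝ) / (2 * ((2 * j : ℕ):ℝ) + 1) ^ 2)
          = fun j : ℕ => (1:ℝ) / (4 * (j:ℝ) + 1) ^ 2 := by
        funext j; push_cast; ring_nf
      rw [heq]; exact hA
    have ho : HasSum (fun j : ℕ => (1:ℝ) / (2 * ((2 * j + 1 : ℕ):ℝ) + 1) ^ 2) B := by
      have heq : (fun j : ℕ => (1:ℝ) / (2 * ((2 * j + 1 : ℕ):ℝ) + 1) ^ 2)
          = fun j : ℕ => (1:ℝ) / (4 * (j:ℝ) + 3) ^ 2 := by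
        funext j; push_cast; ring_nf
      rw [heq]; exact hB
    exact (hOdd.unique (HasSum.even_add_odd he ho)).symm
  -- Catalan's constant
  have hG : HasSum (fun n : ℕ => (-1:ℝ) ^ n / (2 * (n:ℝ) + 1) ^ 2) (A - B) := by
    have he : HasSum (fun j : ℕ => (-1:ℝ) ^ (2 * j) / (2 * ((2 * j : ℕ):ℝ) + 1) ^ 2) A := by
      have heq : (fun j : ℕ => (-1:ℝ) ^ (2 * j) / (2 * ((2 * j : ℕ):ℝ) + 1) ^ 2)
          = fun j : ℕ => (1:ℝ) / (4 * (j:ℝ) + 1) ^ 2 := by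
        funext j
        rw [pow_mul, neg_one_sq, one_pow]
        push_cast; ring_nf
      rw [heq]; exact hA
    have ho : HasSum (fun j : ℕ => (-1:ℝ) ^ (2 * j + 1) / (2 * ((2 * j + 1 : ℕ):ℝ) + 1) ^ 2)
        (-B) := by
      have heq : (fun j : ℕ => (-1:ℝ) ^ (2 * j + 1) / (2 * ((2 * j + 1 : ℕ):ℝ) + 1) ^ 2)
          = fun j : ℕ => -((1:ℝ) / (4 * (j:ℝ) + 3) ^ 2) := by
        funext j
        rw [pow_succ, pow_mul, neg_one_sq, one_pow]
        push_cast; ring_nf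
      rw [heq]; exact hB.neg
    have h2 : HasSum (fun n : ℕ => (-1:ℝ) ^ n / (2 * (n:ℝ) + 1) ^ 2) (A + -B) :=
      HasSum.even_add_odd he ho
    rwa [← sub_eq_add_neg] at h2
  have hGval : (∑' n : ℕ, (-1:ℝ) ^ n / (2 * (n:ℝ) + 1) ^ 2) = A - B := hG.tsum_eq
  -- The 4k+2 part
  have hC : HasSum (fun k : ℕ => (1:ℝ) / (4 * (k:ℝ) + 2) ^ 2) (π ^ 2 / 32) := by
    have h := hOdd.mul_left (1 / 4)
    have heq : (fun k : ℕ => (1:ℝ) / 4 * (1 / (2 * (k:ℝ) + 1) ^ 2))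
        = fun k : ℕ => (1:ℝ) / (4 * (k:ℝ) + 2) ^ 2 := by
      funext k
      rw [div_mul_div_comm]
      congr 1
      · norm_num
      · ring
    rw [heq] at h
    convert h using 1
    · rfl
    ring
  have hS : HasSum (fun k : ℕ => (1:ℝ) / (4 * (k:ℝ) + 1) ^ 2 + 1 / (4 * (k:ℝ) + 2) ^ 2)
      (A + π ^ 2 / 32) := hA.add hC
  -- Step 2: the integral side.
  have key : (∫ x in (0 : ℝ)..1, ∫ y in (0 : ℝ)..1, 1 / ((1 + x ^ 2 * y ^ 2) * (1 - x * y)))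
      = A + π ^ 2 / 32 := by
    rw [intervalIntegral.integral_of_le zero_le_one]
    rw [← setIntegral_congr_set Ioo_ae_eq_Ioc]
    have hcongr : EqOn
        (fun x : ℝ => ∫ y in (0:ℝ)..1, 1 / ((1 + x ^ 2 * y ^ 2) * (1 - x * y)))
        (fun x : ℝ => ∑' k : ℕ,
          (x ^ (4 * k) / (4 * (k:ℝ) + 1) + x ^ (4 * k + 1) / (4 * (k:ℝ) + 2)))
        (Ioo 0 1) := fun x hx => inner_eq x hx.1.le hx.2
    rw [setIntegral_congr_fun measurableSet_Ioo hcongr]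
    have hint : ∀ k : ℕ, Integrable
        (fun x : ℝ => x ^ (4 * k) / (4 * (k:ℝ) + 1) + x ^ (4 * k + 1) / (4 * (k:ℝ) + 2))
        (volume.restrict (Ioo 0 1)) := fun k =>
      ((((continuous_pow _).div_const _).add
        ((continuous_pow _).div_const _)).integrableOn_Ioc).mono_set Ioo_subset_Ioc_self
    have hnorm : (fun k : ℕ => ∫ x in Ioo (0:ℝ) 1,
        ‖x ^ (4 * k) / (4 * (k:ℝ) + 1) + x ^ (4 * k + 1) / (4 * (k:ℝ) + 2)‖)
        = fun k : ℕ => 1 / (4 * (k:ℝ) + 1) ^ 2 + 1 / (4 * (k:ℝ) + 2) ^ 2 := by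
      funext k
      rw [← outer_term k, ← setIntegral_congr_set Ioo_ae_eq_Ioc]
      refine setIntegral_congr_fun measurableSet_Ioo fun x hx => ?_
      have hx0 : (0:ℝ) ≤ x := hx.1.le
      have hk : (0:ℝ) ≤ (k:ℝ) := Nat.cast_nonneg k
      have h1 : (0:ℝ) < 4 * (k:ℝ) + 1 := by linarith
      have h2 : (0:ℝ) < 4 * (k:ℝ) + 2 := by linarith
      exact Real.norm_of_nonneg (add_nonneg
        (div_nonneg (pow_nonneg hx0 _) h1.le) (div_nonneg (pow_nonneg hx0 _) h2.le))
    have hsum : Summable fun k : ℕ => ∫ x in Ioo (0:ℝ) 1,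
        ‖x ^ (4 * k) / (4 * (k:ℝ) + 1) + x ^ (4 * k + 1) / (4 * (k:ℝ) + 2)‖ := by
      rw [hnorm]; exact hS.summable
    rw [← MeasureTheory.integral_tsum_of_summable_integral_norm hint hsum]
    rw [← hS.tsum_eq]
    refine tsum_congr fun k => ?_
    rw [show (∫ x in Ioo (0:ℝ) 1,
        (x ^ (4 * k) / (4 * (k:ℝ) + 1) + x ^ (4 * k + 1) / (4 * (k:ℝ) + 2)))
      = ∫ x in Ioc (0:ℝ) 1,
        (x ^ (4 * k) / (4 * (k:ℝ) + 1) + x ^ (4 * k + 1) / (4 * (k:ℝ) + 2)) from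
      setIntegral_congr_set Ioo_ae_eq_Ioc]
    exact outer_term k
  rw [key, hGval]
  ring_nf
  linarith [hAB]
end

section
/- For all positive integers k ≥ 1 and natural numbers n, m with m ≤ n−1: Σ_{q=k}^{n} 4^{−q} C(2q−1, 2k−1) t(2n, 2q) = 4^{−k} t(2n−1, 2k−1), where t(·,·) are the central factorial numbers of the first kind and C(·,·) binomial coefficients. -/
/-- Central factorial numbers of the first kind `t(n,ν)`, satisfying
`t(n,ν) = t(n−2,ν−2) − (1/4)(n−2)² t(n−2,ν)`, with `t(0,0)=1`, `t(n,n)=1`,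
`t(n,0)=0` for `n ≥ 1`. -/
noncomputable def centralFactorial : ℕ → ℕ → ℝ
  | 0, 0 => 1
  | 0, _ + 1 => 0
  | 1, 0 => 0
  | 1, 1 => 1
  | 1, _ + 2 => 0
  | _ + 2, 0 => 0
  | n + 2, 1 => -(((n : ℝ)) ^ 2 / 4) * centralFactorial n 1
  | n + 2, ν + 2 =>
      centralFactorial n ν - (((n : ℝ)) ^ 2 / 4) * centralFactorial n (ν + 2)

open Finset

lemma cf_rec (m ν : ℕ) : centralFactorial (m+2) (ν+2)
    = centralFactorial m ν - ((m:ℝ)^2/4) * centralFactorial m (ν+2) := by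
  simp [centralFactorial]

lemma cf_one (m : ℕ) : centralFactorial (m+2) 1 = -((m:ℝ)^2/4) * centralFactorial m 1 := by
  simp [centralFactorial]

lemma cf_zero_left (m : ℕ) : centralFactorial (m+2) 0 = 0 := by simp [centralFactorial]

lemma cf_zero (n ν : ℕ) (h : n < ν) : centralFactorial n ν = 0 := by
  induction n using Nat.strong_induction_on generalizing ν with
  | _ n ih =>
    match n, ν, h with
    | 0, ν+1, _ => simp [centralFactorial]
    | 1, ν+2, _ => simp [centralFactorial]
    | n+2, ν+2, h =>
      rw [cf_rec, ih n (by omega) ν (by omega), ih n (by omega) (ν+2) (by omega)]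
      ring

lemma cf_diag (n : ℕ) : centralFactorial n n = 1 := by
  induction n using Nat.strong_induction_on with
  | _ n ih =>
    match n with
    | 0 => simp [centralFactorial]
    | 1 => simp [centralFactorial]
    | n+2 => rw [cf_rec, ih n (by omega), cf_zero n (n+2) (by omega)]; ring

lemma sum_Icc_shift (f : ℕ → ℝ) (a b : ℕ) :
    ∑ r ∈ Icc (a+1) (b+1), f r = ∑ s ∈ Icc a b, f (s+1) := by
  rw [← Finset.map_add_right_Icc, Finset.sum_map]
  rfl

lemma sum_Icc_bot (f : ℕ → ℝ) {a b : ℕ} (h : a ≤ b) :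
    ∑ r ∈ Icc a b, f r = f a + ∑ r ∈ Icc (a+1) b, f r := by
  rw [Finset.Icc_eq_cons_Ioc h, Finset.sum_cons, Finset.Icc_add_one_left_eq_Ioc]

/-- auxiliary sum S -/
noncomputable def Saux (a b : ℕ) : ℝ :=
  ∑ r ∈ Icc a b, (4:ℝ)^(-(r:ℤ)-1) * (Nat.choose (2*r+1) (2*a+1) : ℝ)
    * centralFactorial (2*b+2) (2*r+2)

/-- auxiliary sum T -/
noncomputable def Taux (a b : ℕ) : ℝ :=
  ∑ r ∈ Icc a b, (4:ℝ)^(-(r:ℤ)-1) * (Nat.choose (2*r+1) (2*a) : ℝ)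
    * centralFactorial (2*b+2) (2*r+2)

lemma four_ne : (4:ℝ) ≠ 0 := by norm_num

/-- generic recurrence reduction step -/
lemma reduce (c : ℕ → ℝ) (a b : ℕ) (h : a ≤ b + 1) :
    ∑ r ∈ Icc a (b+1), (4:ℝ)^(-(r:ℤ)-1) * c r * centralFactorial (2*(b+1)+2) (2*r+2)
    = (∑ r ∈ Icc a (b+1), (4:ℝ)^(-(r:ℤ)-1) * c r * centralFactorial (2*b+2) (2*r))
      - ((2*b+2:ℝ))^2/4
        * ∑ r ∈ Icc a b, (4:ℝ)^(-(r:ℤ)-1) * c r * centralFactorial (2*b+2) (2*r+2) := by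
  have key : ∀ r : ℕ, centralFactorial (2*(b+1)+2) (2*r+2)
      = centralFactorial (2*b+2) (2*r) - ((2*b+2:ℝ))^2/4 * centralFactorial (2*b+2) (2*r+2) := by
    intro r
    have h1 : 2*(b+1)+2 = (2*b+2)+2 := by ring
    rw [h1, cf_rec]
    push_cast
    ring_nf
  calc ∑ r ∈ Icc a (b+1), (4:ℝ)^(-(r:ℤ)-1) * c r * centralFactorial (2*(b+1)+2) (2*r+2)
      = ∑ r ∈ Icc a (b+1), ((4:ℝ)^(-(r:ℤ)-1) * c r * centralFactorial (2*b+2) (2*r)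
          - ((2*b+2:ℝ))^2/4 * ((4:ℝ)^(-(r:ℤ)-1) * c r * centralFactorial (2*b+2) (2*r+2))) := by
        apply Finset.sum_congr rfl
        intro r _
        rw [key r]; ring
    _ = (∑ r ∈ Icc a (b+1), (4:ℝ)^(-(r:ℤ)-1) * c r * centralFactorial (2*b+2) (2*r))
        - ((2*b+2:ℝ))^2/4
          * ∑ r ∈ Icc a (b+1), (4:ℝ)^(-(r:ℤ)-1) * c r * centralFactorial (2*b+2) (2*r+2) := by
        rw [Finset.sum_sub_distrib, Finset.mul_sum]
    _ = _ := by
        have h2 : ∑ r ∈ Icc a (b+1), (4:ℝ)^(-(r:ℤ)-1) * c r * centralFactorial (2*b+2) (2*r+2)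
            = ∑ r ∈ Icc a b, (4:ℝ)^(-(r:ℤ)-1) * c r * centralFactorial (2*b+2) (2*r+2) := by
          rw [Finset.sum_Icc_succ_top h, cf_zero (2*b+2) (2*(b+1)+2) (by omega)]
          ring_nf
        rw [h2]

/-- shift step: reindex the "lowered" sum -/
lemma shift (c : ℕ → ℝ) (a b : ℕ) (ha : centralFactorial (2*b+2) (2*a) * ((4:ℝ)^(-(a:ℤ)-1) * c a) = 0 → True) :
    True := trivial

lemma shift_ge1 (c : ℕ → ℝ) (a b : ℕ) :
    ∑ r ∈ Icc (a+1) (b+1), (4:ℝ)^(-(r:ℤ)-1) * c r * centralFactorial (2*b+2) (2*r)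
    = (4:ℝ)⁻¹ * ∑ s ∈ Icc a b, (4:ℝ)^(-(s:ℤ)-1) * c (s+1) * centralFactorial (2*b+2) (2*s+2) := by
  rw [sum_Icc_shift, Finset.mul_sum]
  apply Finset.sum_congr rfl
  intro s _
  have h1 : 2*(s+1) = 2*s+2 := by ring
  have h2 : (4:ℝ)^(-((s:ℤ)+1)-1) = (4:ℝ)⁻¹ * (4:ℝ)^(-(s:ℤ)-1) := by
    rw [show -((s:ℤ)+1)-1 = (-1) + (-(s:ℤ)-1) by ring, zpow_add₀ four_ne, zpow_neg_one]
  rw [h1]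
  push_cast
  rw [h2]
  ring

lemma shift_zero (c : ℕ → ℝ) (b : ℕ) :
    ∑ r ∈ Icc 0 (b+1), (4:ℝ)^(-(r:ℤ)-1) * c r * centralFactorial (2*b+2) (2*r)
    = (4:ℝ)⁻¹ * ∑ s ∈ Icc 0 b, (4:ℝ)^(-(s:ℤ)-1) * c (s+1) * centralFactorial (2*b+2) (2*s+2) := by
  rw [sum_Icc_bot _ (Nat.zero_le _), show (2*0) = 0 by ring, cf_zero_left, ← shift_ge1 c 0 b]
  simp

/-- drop a vanishing bottom term -/
lemma drop_bot (c : ℕ → ℝ) {a b : ℕ} (h : a ≤ b) (hc : c a = 0) :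
    ∑ s ∈ Icc a b, (4:ℝ)^(-(s:ℤ)-1) * c s * centralFactorial (2*b+2) (2*s+2)
    = ∑ s ∈ Icc (a+1) b, (4:ℝ)^(-(s:ℤ)-1) * c s * centralFactorial (2*b+2) (2*s+2) := by
  rw [sum_Icc_bot _ h, hc]
  simp


lemma choose_split (n m : ℕ) :
    (((n+2).choose (m+2) : ℕ) : ℝ)
      = (n.choose (m+2) : ℝ) + 2*(n.choose (m+1) : ℝ) + (n.choose m : ℝ) := by
  rw [Nat.choose_succ_succ (n+1) (m+1), Nat.choose_succ_succ n m, Nat.choose_succ_succ n (m+1)]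
  push_cast; ring

lemma key_lemma : ∀ b a : ℕ, a ≤ b →
    Saux a b = (4:ℝ)^(-(a:ℤ)-1) * centralFactorial (2*b+1) (2*a+1) ∧
    Taux a b = (2*(b:ℝ)+1) * (4:ℝ)^(-(a:ℤ)-1) * centralFactorial (2*b+1) (2*a+1) := by
  intro b
  induction b with
  | zero =>
    intro a ha
    interval_cases a
    constructor
    · simp [Saux, cf_diag]
    · simp [Taux, cf_diag]
  | succ b ih =>
    intro a ha
    rcases Nat.lt_or_ge a (b+1) with ha' | ha'
    · -- a ≤ b : inductive case
      have hab : a ≤ b := by omega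
      obtain ⟨hS, hT⟩ := ih a hab
      have hS1 := reduce (fun r => (((2*r+1).choose (2*a+1) : ℕ) : ℝ)) a b (by omega)
      have hT1 := reduce (fun r => (((2*r+1).choose (2*a) : ℕ) : ℝ)) a b (by omega)
      unfold Saux at hS ⊢
      unfold Taux at hT ⊢
      rcases Nat.eq_zero_or_pos a with rfl | hpos
      · -- a = 0 case
        have hSsh := shift_zero (fun r => (((2*r+1).choose (2*0+1) : ℕ) : ℝ)) b
        have hTsh := shift_zero (fun r => (((2*r+1).choose (2*0) : ℕ) : ℝ)) b
        have hcomb : ∑ s ∈ Icc 0 b, (4:ℝ)^(-(s:ℤ)-1) * (((2*(s+1)+1).choose (2*0+1) : ℕ) : ℝ)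
              * centralFactorial (2*b+2) (2*s+2)
            = (∑ r ∈ Icc 0 b, (4:ℝ)^(-(r:ℤ)-1) * (((2*r+1).choose (2*0+1) : ℕ) : ℝ)
                * centralFactorial (2*b+2) (2*r+2))
              + 2 * ∑ r ∈ Icc 0 b, (4:ℝ)^(-(r:ℤ)-1) * (((2*r+1).choose (2*0) : ℕ) : ℝ)
                * centralFactorial (2*b+2) (2*r+2) := by
          rw [Finset.mul_sum, ← Finset.sum_add_distrib]
          apply Finset.sum_congr rfl
          intro s _
          simp only [show (2:ℕ)*0+1 = 1 from rfl, show (2:ℕ)*0 = 0 from rfl,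
            Nat.choose_one_right, Nat.choose_zero_right]
          push_cast
          ring
        have hcf : centralFactorial (2*(b+1)+1) (2*0+1)
            = -(((2*b+1:ℕ):ℝ)^2/4) * centralFactorial (2*b+1) 1 := by
          rw [show 2*(b+1)+1 = (2*b+1)+2 by ring, show 2*0+1 = 1 by rfl, cf_one]
        constructor
        · rw [hS1, hSsh, hcomb, hS, hT, hcf]
          rw [show (2:ℕ)*0+1 = 1 by rfl] at *
          push_cast
          ring
        · rw [hT1, hTsh, hT, hcf]
          have hTsh2 : ∑ s ∈ Icc 0 b, (4:ℝ)^(-(s:ℤ)-1) * (((2*(s+1)+1).choose (2*0) : ℕ) : ℝ)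
                * centralFactorial (2*b+2) (2*s+2)
              = ∑ r ∈ Icc 0 b, (4:ℝ)^(-(r:ℤ)-1) * (((2*r+1).choose (2*0) : ℕ) : ℝ)
                * centralFactorial (2*b+2) (2*r+2) := by
            apply Finset.sum_congr rfl
            intro s _
            simp
          rw [hTsh2, hT]
          rw [show (2:ℕ)*0+1 = 1 by rfl] at *
          push_cast
          ring
      · -- a ≥ 1 case
        obtain ⟨a', rfl⟩ : ∃ a', a = a'+1 := ⟨a-1, by omega⟩
        obtain ⟨hS', hT'⟩ := ih a' (by omega)
        unfold Saux at hS'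
        unfold Taux at hT'
        have hSsh := shift_ge1 (fun r => (((2*r+1).choose (2*(a'+1)+1) : ℕ) : ℝ)) a' b
        have hTsh := shift_ge1 (fun r => (((2*r+1).choose (2*(a'+1)) : ℕ) : ℝ)) a' b
        have echoose : ∀ s : ℕ, (((2*(s+1)+1).choose (2*(a'+1)+1) : ℕ) : ℝ)
            = (((2*s+1).choose (2*(a'+1)+1) : ℕ) : ℝ)
              + 2*(((2*s+1).choose (2*(a'+1)) : ℕ) : ℝ)
              + (((2*s+1).choose (2*a'+1) : ℕ) : ℝ) := by
          intro s
          rw [show 2*(s+1)+1 = (2*s+1)+2 by ring, show 2*(a'+1)+1 = (2*a'+1)+2 by ring,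
            choose_split, show 2*(a'+1) = (2*a'+1)+1 by ring]
        have echooseT : ∀ s : ℕ, (((2*(s+1)+1).choose (2*(a'+1)) : ℕ) : ℝ)
            = (((2*s+1).choose (2*(a'+1)) : ℕ) : ℝ)
              + 2*(((2*s+1).choose (2*a'+1) : ℕ) : ℝ)
              + (((2*s+1).choose (2*a') : ℕ) : ℝ) := by
          intro s
          rw [show 2*(s+1)+1 = (2*s+1)+2 by ring, show 2*(a'+1) = (2*a')+2 by ring,
            choose_split, show 2*a'+1 = (2*a')+1 by ring]
        have hcombS : ∑ s ∈ Icc a' b, (4:ℝ)^(-(s:ℤ)-1) * (((2*(s+1)+1).choose (2*(a'+1)+1) : ℕ) : ℝ)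
              * centralFactorial (2*b+2) (2*s+2)
            = (∑ r ∈ Icc (a'+1) b, (4:ℝ)^(-(r:ℤ)-1) * (((2*r+1).choose (2*(a'+1)+1) : ℕ) : ℝ)
                * centralFactorial (2*b+2) (2*r+2))
              + 2 * (∑ r ∈ Icc (a'+1) b, (4:ℝ)^(-(r:ℤ)-1) * (((2*r+1).choose (2*(a'+1)) : ℕ) : ℝ)
                * centralFactorial (2*b+2) (2*r+2))
              + ∑ r ∈ Icc a' b, (4:ℝ)^(-(r:ℤ)-1) * (((2*r+1).choose (2*a'+1) : ℕ) : ℝ)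
                * centralFactorial (2*b+2) (2*r+2) := by
          rw [← drop_bot (fun r => (((2*r+1).choose (2*(a'+1)+1) : ℕ) : ℝ)) (by omega)
              (by norm_num [Nat.choose_eq_zero_of_lt (by omega : 2*a'+1 < 2*(a'+1)+1)]),
            ← drop_bot (fun r => (((2*r+1).choose (2*(a'+1)) : ℕ) : ℝ)) (by omega)
              (by norm_num [Nat.choose_eq_zero_of_lt (by omega : 2*a'+1 < 2*(a'+1))]),
            Finset.mul_sum, ← Finset.sum_add_distrib, ← Finset.sum_add_distrib]
          apply Finset.sum_congr rfl
          intro s _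
          rw [echoose s]
          ring
        have hcombT : ∑ s ∈ Icc a' b, (4:ℝ)^(-(s:ℤ)-1) * (((2*(s+1)+1).choose (2*(a'+1)) : ℕ) : ℝ)
              * centralFactorial (2*b+2) (2*s+2)
            = (∑ r ∈ Icc (a'+1) b, (4:ℝ)^(-(r:ℤ)-1) * (((2*r+1).choose (2*(a'+1)) : ℕ) : ℝ)
                * centralFactorial (2*b+2) (2*r+2))
              + 2 * (∑ r ∈ Icc a' b, (4:ℝ)^(-(r:ℤ)-1) * (((2*r+1).choose (2*a'+1) : ℕ) : ℝ)
                * centralFactorial (2*b+2) (2*r+2))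
              + ∑ r ∈ Icc a' b, (4:ℝ)^(-(r:ℤ)-1) * (((2*r+1).choose (2*a') : ℕ) : ℝ)
                * centralFactorial (2*b+2) (2*r+2) := by
          rw [← drop_bot (fun r => (((2*r+1).choose (2*(a'+1)) : ℕ) : ℝ)) (by omega)
              (by norm_num [Nat.choose_eq_zero_of_lt (by omega : 2*a'+1 < 2*(a'+1))]),
            Finset.mul_sum, ← Finset.sum_add_distrib, ← Finset.sum_add_distrib]
          apply Finset.sum_congr rfl
          intro s _
          rw [echooseT s]
          ring
        have hcf : centralFactorial (2*(b+1)+1) (2*(a'+1)+1)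
            = centralFactorial (2*b+1) (2*a'+1)
              - (((2*b+1:ℕ):ℝ)^2/4) * centralFactorial (2*b+1) (2*(a'+1)+1) := by
          rw [show 2*(b+1)+1 = (2*b+1)+2 by ring, show 2*(a'+1)+1 = (2*a'+1)+2 by ring, cf_rec]
        have hp : (4:ℝ)^(-((a'+1:ℕ):ℤ)-1) = 4⁻¹ * (4:ℝ)^(-(a':ℤ)-1) := by
          push_cast
          rw [show -((a':ℤ)+1)-1 = (-1) + (-(a':ℤ)-1) by ring, zpow_add₀ four_ne, zpow_neg_one]
        constructor
        · rw [hS1, hSsh, hcombS, hS, hT, hS', hcf, hp]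
          push_cast
          ring
        · rw [hT1, hTsh, hcombT, hT, hS', hT', hcf, hp]
          push_cast
          ring
    · -- a = b + 1 : diagonal case
      have : a = b + 1 := by omega
      subst this
      constructor
      · unfold Saux
        rw [Finset.Icc_self, Finset.sum_singleton, Nat.choose_self, cf_diag,
          cf_diag]
        push_cast; ring
      · unfold Taux
        rw [Finset.Icc_self, Finset.sum_singleton, show 2*(b+1)+1 = (2*(b+1))+1 by ring,
          Nat.choose_succ_self_right, cf_diag, cf_diag]
        push_cast; ring

/-- `Σ_{q=k}^n 4^{−q} C(2q−1,2k−1) t(2n,2q) = 4^{−k} t(2n−1,2k−1)` for `1 ≤ k ≤ n`. -/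
theorem centralFactorial_identity (k n : ℕ) (hk : 1 ≤ k) (hkn : k ≤ n) :
    ∑ q ∈ Finset.Icc k n,
        (4 : ℝ) ^ (-(q : ℤ)) * (Nat.choose (2 * q - 1) (2 * k - 1) : ℝ) *
          centralFactorial (2 * n) (2 * q) =
      (4 : ℝ) ^ (-(k : ℤ)) * centralFactorial (2 * n - 1) (2 * k - 1) := by
  obtain ⟨a, rfl⟩ : ∃ a, k = a + 1 := ⟨k - 1, by omega⟩
  obtain ⟨b, rfl⟩ : ∃ b, n = b + 1 := ⟨n - 1, by omega⟩
  have h := (key_lemma b a (by omega)).1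
  unfold Saux at h
  rw [sum_Icc_shift]
  have hmain : ∑ s ∈ Finset.Icc a b,
      (4 : ℝ) ^ (-((s+1 : ℕ) : ℤ)) * (Nat.choose (2 * (s+1) - 1) (2 * (a+1) - 1) : ℝ) *
        centralFactorial (2 * (b+1)) (2 * (s+1))
      = ∑ r ∈ Finset.Icc a b, (4:ℝ)^(-(r:ℤ)-1) * (((2*r+1).choose (2*a+1) : ℕ) : ℝ)
          * centralFactorial (2*b+2) (2*r+2) := by
    apply Finset.sum_congr rfl
    intro r _
    rw [show 2*(r+1)-1 = 2*r+1 from by omega, show 2*(a+1)-1 = 2*a+1 from by omega,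
      show 2*(b+1) = 2*b+2 from by ring, show 2*(r+1) = 2*r+2 from by ring,
      show (-((r+1 : ℕ) : ℤ)) = -(r:ℤ)-1 from by push_cast; ring]
  rw [hmain, h,
    show 2*(b+1)-1 = 2*b+1 from by omega, show 2*(a+1)-1 = 2*a+1 from by omega,
    show (-((a+1 : ℕ) : ℤ)) = -(a:ℤ)-1 from by push_cast; ring]
end
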